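/- arXiv:1204.3536 — 6 statements merged into one kernel-verified Lean document; each statement's English description precedes it below -/
import Mathlib

section
/- Let K ≥ 1 and let ρ_1,…,ρ_K > 0 with ∑_{l=1}^K ρ_l = 1, and let Θ_1,…,Θ_K > 0. Set θ = ∑_{l=1}^K ρ_l Θ_l. Then ∑_{l=1}^K ρ_l/Θ_l ≤ θ · ∑_{l=1}^K ρ_l/Θ_l², equivalently (∑_{l=1}^K ρ_l/Θ_l) / (∑_{l=1}^K (3/2)·ρ_l/Θ_l²) ≤ (2/3)·θ. Consequently the leading-order critical noise level of the heterogeneous model, σ_c^{div} = sqrt((∑ ρ_l/Θ_l)/(∑ 3ρ_l/(2Θ_l²))), is at most that of the homogeneous model, σ_c^{homo} = sqrt(2θ/3). -/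
/-- With `θ = ∑ ρ_l Θ_l`: `∑ ρ_l/Θ_l ≤ θ·∑ ρ_l/Θ_l²`, equivalently
`(∑ ρ_l/Θ_l)/(∑ (3/2)ρ_l/Θ_l²) ≤ (2/3)θ`, and consequently
`σ_c^{div} = sqrt((∑ ρ_l/Θ_l)/(∑ 3ρ_l/(2Θ_l²))) ≤ σ_c^{homo} = sqrt(2θ/3)`. -/
theorem stmt_2 (K : ℕ) (hK : 1 ≤ K) (ρ Θ : Fin K → ℝ)
    (hρ : ∀ l, 0 < ρ l) (hsum : ∑ l, ρ l = 1) (hΘ : ∀ l, 0 < Θ l)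
    (θ : ℝ) (hθ : θ = ∑ l, ρ l * Θ l) :
    (∑ l, ρ l / Θ l) ≤ θ * ∑ l, ρ l / (Θ l) ^ 2 ∧
    (∑ l, ρ l / Θ l) / (∑ l, (3 / 2) * ρ l / (Θ l) ^ 2) ≤ (2 / 3) * θ ∧
    Real.sqrt ((∑ l, ρ l / Θ l) / (∑ l, 3 * ρ l / (2 * (Θ l) ^ 2)))
      ≤ Real.sqrt (2 * θ / 3) := by
  have hne : Nonempty (Fin K) := Fin.pos_iff_nonempty.mp hK
  set S1 := ∑ l, ρ l / Θ l with hS1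
  set S2 := ∑ l, ρ l / (Θ l) ^ 2 with hS2
  have hS1pos : 0 < S1 := Finset.sum_pos (fun l _ => div_pos (hρ l) (hΘ l)) Finset.univ_nonempty
  have hS2pos : 0 < S2 := Finset.sum_pos (fun l _ => div_pos (hρ l) (pow_pos (hΘ l) 2)) Finset.univ_nonempty
  have hθpos : 0 < θ := hθ ▸ Finset.sum_pos (fun l _ => mul_pos (hρ l) (hΘ l)) Finset.univ_nonempty
  -- CS 1: S1^2 ≤ 1 * S2
  have cs1 : S1 ^ 2 ≤ S2 := by
    have h := Finset.sum_mul_sq_le_sq_mul_sq Finset.univ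
      (fun l => Real.sqrt (ρ l)) (fun l => Real.sqrt (ρ l) / Θ l)
    have e1 : ∑ l, Real.sqrt (ρ l) * (Real.sqrt (ρ l) / Θ l) = S1 :=
      Finset.sum_congr rfl fun l _ => by
        rw [mul_div_assoc', Real.mul_self_sqrt (hρ l).le]
    have e2 : ∑ l, Real.sqrt (ρ l) ^ 2 = (1:ℝ) := by
      rw [← hsum]; exact Finset.sum_congr rfl fun l _ => Real.sq_sqrt (hρ l).le
    have e3 : ∑ l, (Real.sqrt (ρ l) / Θ l) ^ 2 = S2 :=
      Finset.sum_congr rfl fun l _ => by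
        rw [div_pow, Real.sq_sqrt (hρ l).le]
    rw [e1, e2, e3, one_mul] at h
    exact h
  -- CS 2: 1 ≤ θ * S1
  have cs2 : 1 ≤ θ * S1 := by
    have h := Finset.sum_mul_sq_le_sq_mul_sq Finset.univ
      (fun l => Real.sqrt (ρ l * Θ l)) (fun l => Real.sqrt (ρ l / Θ l))
    have e1 : ∑ l, Real.sqrt (ρ l * Θ l) * Real.sqrt (ρ l / Θ l) = (1:ℝ) := by
      rw [← hsum]
      refine Finset.sum_congr rfl fun l _ => ?_
      rw [← Real.sqrt_mul (mul_nonneg (hρ l).le (hΘ l).le)]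
      have : ρ l * Θ l * (ρ l / Θ l) = ρ l ^ 2 := by
        field_simp [(hΘ l).ne']
      rw [this, Real.sqrt_sq (hρ l).le]
    have e2 : ∑ l, Real.sqrt (ρ l * Θ l) ^ 2 = θ := by
      rw [hθ]; exact Finset.sum_congr rfl fun l _ => Real.sq_sqrt (mul_nonneg (hρ l).le (hΘ l).le)
    have e3 : ∑ l, Real.sqrt (ρ l / Θ l) ^ 2 = S1 :=
      Finset.sum_congr rfl fun l _ => Real.sq_sqrt (div_nonneg (hρ l).le (hΘ l).le)
    rw [e1, e2, e3, one_pow] at h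
    exact h
  have h1 : S1 ≤ θ * S2 := by nlinarith
  have hden : (∑ l, (3 / 2) * ρ l / (Θ l) ^ 2) = (3/2) * S2 := by
    rw [hS2, Finset.mul_sum]; exact Finset.sum_congr rfl fun l _ => by ring
  have hden2 : (∑ l, 3 * ρ l / (2 * (Θ l) ^ 2)) = (3/2) * S2 := by
    rw [hS2, Finset.mul_sum]
    refine Finset.sum_congr rfl fun l _ => ?_
    field_simp
  have h2 : S1 / ((3/2) * S2) ≤ (2/3) * θ := by
    rw [div_le_iff₀ (by positivity)]; nlinarith
  refine ⟨h1, by rw [hden]; exact h2, ?_⟩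
  rw [hden2]
  apply Real.sqrt_le_sqrt
  linarith [h2]
end

section
/- Let K ≥ 1, ρ_1,…,ρ_K > 0 with ∑ρ_l = 1, Θ_1,…,Θ_K > 0, set θ = ∑_{l=1}^K ρ_l Θ_l, and let σ > 0 satisfy 3σ² < 2θ. Then ( ∑_{l=1}^K (ρ_l/Θ_l)(1 − 3σ²/(2Θ_l)) ) / ( ∑_{l=1}^K ρ_l/Θ_l ) ≤ 1 − 3σ²/(2θ) < 1. In other words, the leading-order squared equilibrium value of the heterogeneous model, (ξ_b^{div})², is at most the leading-order squared equilibrium value of the homogeneous model, (ξ_b^{homo})² = 1 − 3σ²/(2θ), which is itself less than 1. -/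
/-- If `3σ² < 2θ` with `θ = ∑ ρ_l Θ_l`, then
`(∑ (ρ_l/Θ_l)(1 − 3σ²/(2Θ_l)))/(∑ ρ_l/Θ_l) ≤ 1 − 3σ²/(2θ) < 1`:
the leading-order squared heterogeneous equilibrium is at most the homogeneous one,
which is itself less than 1. -/
theorem stmt_3 (K : ℕ) (hK : 1 ≤ K) (ρ Θ : Fin K → ℝ)
    (hρ : ∀ l, 0 < ρ l) (hsum : ∑ l, ρ l = 1) (hΘ : ∀ l, 0 < Θ l)
    (θ σ : ℝ) (hθ : θ = ∑ l, ρ l * Θ l) (hσ : 0 < σ)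
    (hcrit : 3 * σ ^ 2 < 2 * θ) :
    (∑ l, (ρ l / Θ l) * (1 - 3 * σ ^ 2 / (2 * Θ l))) / (∑ l, ρ l / Θ l)
      ≤ 1 - 3 * σ ^ 2 / (2 * θ) ∧
    1 - 3 * σ ^ 2 / (2 * θ) < 1 := by
  have hθpos : 0 < θ := by nlinarith [sq_nonneg σ]
  have hS1 : 0 < ∑ l, ρ l / Θ l :=
    Finset.sum_pos (fun l _ => div_pos (hρ l) (hΘ l)) ⟨⟨0, hK⟩, Finset.mem_univ _⟩
  -- Cauchy–Schwarz 1 : 1 = (∑ ρ)² ≤ θ · S1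
  have hcs1 : (1:ℝ) ≤ θ * ∑ l, ρ l / Θ l := by
    have := Finset.sum_mul_sq_le_sq_mul_sq Finset.univ
      (fun l => Real.sqrt (ρ l * Θ l)) (fun l => Real.sqrt (ρ l / Θ l))
    have e1 : ∀ l : Fin K, Real.sqrt (ρ l * Θ l) * Real.sqrt (ρ l / Θ l) = ρ l := by
      intro l
      rw [← Real.sqrt_mul (mul_nonneg (hρ l).le (hΘ l).le)]
      have : ρ l * Θ l * (ρ l / Θ l) = (ρ l) ^ 2 := by
        field_simp [(hΘ l).ne']
      rw [this, Real.sqrt_sq (hρ l).le]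
    have e2 : ∀ l : Fin K, Real.sqrt (ρ l * Θ l) ^ 2 = ρ l * Θ l := fun l =>
      Real.sq_sqrt (mul_nonneg (hρ l).le (hΘ l).le)
    have e3 : ∀ l : Fin K, Real.sqrt (ρ l / Θ l) ^ 2 = ρ l / Θ l := fun l =>
      Real.sq_sqrt (div_nonneg (hρ l).le (hΘ l).le)
    simp only [e1, e2, e3, hsum] at this
    calc (1:ℝ) = (1:ℝ)^2 := by ring
    _ ≤ (∑ l, ρ l * Θ l) * ∑ l, ρ l / Θ l := this
    _ = θ * ∑ l, ρ l / Θ l := by rw [hθ]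
  -- Cauchy–Schwarz 2 : S1² ≤ S2
  have hcs2 : (∑ l, ρ l / Θ l) ^ 2 ≤ ∑ l, ρ l / (Θ l) ^ 2 := by
    have := Finset.sum_mul_sq_le_sq_mul_sq Finset.univ
      (fun l => Real.sqrt (ρ l)) (fun l => Real.sqrt (ρ l) / Θ l)
    have e1 : ∀ l : Fin K, Real.sqrt (ρ l) * (Real.sqrt (ρ l) / Θ l) = ρ l / Θ l := by
      intro l
      rw [mul_div_assoc', Real.mul_self_sqrt (hρ l).le]
    have e2 : ∀ l : Fin K, Real.sqrt (ρ l) ^ 2 = ρ l := fun l => Real.sq_sqrt (hρ l).le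
    have e3 : ∀ l : Fin K, (Real.sqrt (ρ l) / Θ l) ^ 2 = ρ l / (Θ l) ^ 2 := by
      intro l
      rw [div_pow, Real.sq_sqrt (hρ l).le]
    simp only [e1, e2, e3, hsum, one_mul] at this
    exact this
  have hkey : (∑ l, ρ l / Θ l) ≤ θ * ∑ l, ρ l / (Θ l) ^ 2 := by
    nlinarith [hS1, hθpos]
  have hsum_eq : ∑ l, (ρ l / Θ l) * (1 - 3 * σ ^ 2 / (2 * Θ l))
      = (∑ l, ρ l / Θ l) - 3 * σ ^ 2 / 2 * ∑ l, ρ l / (Θ l) ^ 2 := by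
    rw [Finset.mul_sum, ← Finset.sum_sub_distrib]
    refine Finset.sum_congr rfl fun l _ => ?_
    have h := (hΘ l).ne'
    field_simp
  constructor
  · rw [hsum_eq, div_le_iff₀ hS1]
    have hmain : 3 * σ ^ 2 / (2 * θ) * (∑ l, ρ l / Θ l)
        ≤ 3 * σ ^ 2 / 2 * ∑ l, ρ l / (Θ l) ^ 2 := by
      rw [div_mul_eq_mul_div, div_le_iff₀ (by positivity)]
      nlinarith [hkey, sq_nonneg σ]
    nlinarith [hmain]
  · have : 0 < 3 * σ ^ 2 / (2 * θ) := by positivity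
    linarith
end

section
/- Fix σ > 0, v > 0, ξ ∈ ℝ, and set η = 2/σ², V(y) = y⁴/4 − y²/2. For h > 0 define Z(h) = ∫_ℝ exp(−(y−ξ)²/(2v) − hηV(y)) dy and m(h) = Z(h)^{−1} ∫_ℝ y·exp(−(y−ξ)²/(2v) − hηV(y)) dy. Then, as h → 0⁺, m(h) = ξ − h·η·v·(ξ³ + 3vξ − ξ) + O(h²). -/
open MeasureTheory Real

private lemma exp_neg_le_quad {x : ℝ} (hx : 0 ≤ x) : Real.exp (-x) ≤ 1 - x + x^2/2 := by
  have hmono : MonotoneOn (fun x : ℝ => 1 - x + x^2/2 - Real.exp (-x)) (Set.Ici 0) := by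
    have hd : ∀ y : ℝ, HasDerivAt (fun x : ℝ => 1 - x + x^2/2 - Real.exp (-x))
        (-1 + y + Real.exp (-y)) y := by
      intro y
      have h1 : HasDerivAt (fun x : ℝ => Real.exp (-x)) (Real.exp (-y) * (-1)) y :=
        (hasDerivAt_neg y).exp
      have h2 : HasDerivAt (fun x : ℝ => 1 - x + x^2/2) (-1 + y) y := by
        have : HasDerivAt (fun x : ℝ => x^2) ((2:ℕ) * y ^ 1) y := hasDerivAt_pow 2 y
        have := ((hasDerivAt_const y (1:ℝ)).sub (hasDerivAt_id y)).add (this.div_const 2)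
        refine this.congr_deriv ?_; push_cast; ring
      have := h2.sub h1
      refine this.congr_deriv ?_; ring
    apply monotoneOn_of_deriv_nonneg (convex_Ici 0)
    · exact fun x _ => ((hd x).continuousAt).continuousWithinAt
    · exact fun x _ => ((hd x).differentiableAt).differentiableWithinAt
    · intro x hx
      rw [(hd x).deriv]
      have := Real.add_one_le_exp (-x)
      linarith
  have h0 := hmono (Set.self_mem_Ici) hx hx
  simp at h0
  linarith

private lemma exp_le_self_quad {t : ℝ} (ht : 0 ≤ t) :
    Real.exp t ≤ 1 + t + t^2/2 * Real.exp t := by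
  have hd2 : ∀ y : ℝ, HasDerivAt (fun t : ℝ => 1 + t * Real.exp t + t^2/2 * Real.exp t - Real.exp t)
      (Real.exp y * (2*y + y^2/2)) y := by
    intro y
    have he : HasDerivAt Real.exp (Real.exp y) y := Real.hasDerivAt_exp y
    have h1 : HasDerivAt (fun t : ℝ => t * Real.exp t) (1 * Real.exp y + y * Real.exp y) y :=
      (hasDerivAt_id y).mul he
    have hsq : HasDerivAt (fun t : ℝ => t^2/2) (y) y := by
      have : HasDerivAt (fun x : ℝ => x^2) ((2:ℕ) * y ^ 1) y := hasDerivAt_pow 2 y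
      have := this.div_const 2
      refine this.congr_deriv ?_; push_cast; ring
    have h2 : HasDerivAt (fun t : ℝ => t^2/2 * Real.exp t) (y * Real.exp y + y^2/2 * Real.exp y) y :=
      hsq.mul he
    have := (((hasDerivAt_const y (1:ℝ)).add h1).add h2).sub he
    refine this.congr_deriv ?_; ring
  have hmono2 : MonotoneOn (fun t : ℝ => 1 + t * Real.exp t + t^2/2 * Real.exp t - Real.exp t)
      (Set.Ici 0) := by
    apply monotoneOn_of_deriv_nonneg (convex_Ici 0)
    · exact fun x _ => ((hd2 x).continuousAt).continuousWithinAt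
    · exact fun x _ => ((hd2 x).differentiableAt).differentiableWithinAt
    · intro x hx
      rw [(hd2 x).deriv]
      rw [interior_Ici] at hx
      have hx' : (0:ℝ) < x := hx
      positivity
  -- derivative of g is the above function, also monotone argument
  have hd : ∀ y : ℝ, HasDerivAt (fun t : ℝ => 1 + t + t^2/2 * Real.exp t - Real.exp t)
      (1 + y * Real.exp y + y^2/2 * Real.exp y - Real.exp y) y := by
    intro y
    have he : HasDerivAt Real.exp (Real.exp y) y := Real.hasDerivAt_exp y
    have hsq : HasDerivAt (fun t : ℝ => t^2/2) (y) y := by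
      have : HasDerivAt (fun x : ℝ => x^2) ((2:ℕ) * y ^ 1) y := hasDerivAt_pow 2 y
      have := this.div_const 2
      refine this.congr_deriv ?_; push_cast; ring
    have h2 : HasDerivAt (fun t : ℝ => t^2/2 * Real.exp t) (y * Real.exp y + y^2/2 * Real.exp y) y :=
      hsq.mul he
    have := (((hasDerivAt_const y (1:ℝ)).add (hasDerivAt_id y)).add h2).sub he
    refine this.congr_deriv ?_; ring
  have hmono : MonotoneOn (fun t : ℝ => 1 + t + t^2/2 * Real.exp t - Real.exp t) (Set.Ici 0) := by
    apply monotoneOn_of_deriv_nonneg (convex_Ici 0)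
    · exact fun x _ => ((hd x).continuousAt).continuousWithinAt
    · exact fun x _ => ((hd x).differentiableAt).differentiableWithinAt
    · intro x hx
      rw [(hd x).deriv]
      rw [interior_Ici] at hx
      have h0 := hmono2 (Set.self_mem_Ici) (Set.mem_Ici.mpr hx.le) hx.le
      simp at h0
      linarith
  have h0 := hmono (Set.self_mem_Ici) ht ht
  simp at h0
  linarith

lemma exp_taylor_bound {a x : ℝ} (ha : 0 ≤ a) (hx : -a ≤ x) :
    |Real.exp (-x) - 1 + x| ≤ x^2/2 * Real.exp a := by
  have h1a : (1:ℝ) ≤ Real.exp a := Real.one_le_exp ha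
  rcases le_or_gt 0 x with hx0 | hx0
  · have hlow : 0 ≤ Real.exp (-x) - 1 + x := by
      have := Real.add_one_le_exp (-x); linarith
    have hup : Real.exp (-x) - 1 + x ≤ x^2/2 := by
      have := exp_neg_le_quad hx0; linarith
    rw [abs_of_nonneg hlow]
    nlinarith [sq_nonneg x]
  · have hlow : 0 ≤ Real.exp (-x) - 1 + x := by
      have := Real.add_one_le_exp (-x); linarith
    rw [abs_of_nonneg hlow]
    have ht : 0 ≤ -x := by linarith
    have h2 := exp_le_self_quad ht
    have h3 : Real.exp (-x) ≤ Real.exp a := Real.exp_le_exp.mpr (by linarith)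
    nlinarith [sq_nonneg x, Real.exp_pos (-x)]

lemma abs_pow_le_exp (k : ℕ) (x : ℝ) : |x|^k ≤ k.factorial * Real.exp |x| := by
  have hsum := Real.sum_le_exp_of_nonneg (abs_nonneg x) (k+1)
  have hterm : |x|^k / k.factorial ≤ ∑ i ∈ Finset.range (k+1), |x|^i / i.factorial := by
    exact Finset.single_le_sum (f := fun i => |x|^i / (i.factorial : ℝ))
      (fun i _ => by positivity) (Finset.self_mem_range_succ k)
  have hfac : (0:ℝ) < k.factorial := by positivity
  rw [div_le_iff₀ hfac] at hterm
  calc |x|^k ≤ Real.exp |x| * k.factorial :=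
        le_trans hterm (mul_le_mul_of_nonneg_right hsum hfac.le)
    _ = k.factorial * Real.exp |x| := by ring

lemma integrable_abs_pow_gauss {b : ℝ} (hb : 0 < b) (ξ : ℝ) (k : ℕ) :
    Integrable fun x : ℝ => |x|^k * Real.exp (-b*(x-ξ)^2) := by
  set C : ℝ := k.factorial * Real.exp (1/(2*b) + |ξ|) with hC
  have hdom : Integrable fun x : ℝ => C * Real.exp (-(b/2)*(x-ξ)^2) :=
    ((integrable_exp_neg_mul_sq (half_pos hb)).comp_sub_right ξ).const_mul C
  apply Integrable.mono' hdom
  · apply Continuous.aestronglyMeasurable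
    fun_prop
  · filter_upwards with x
    have h1 : |x| ≤ (b/2)*(x-ξ)^2 + (1/(2*b) + |ξ|) := by
      have habs : |x| ≤ |x - ξ| + |ξ| := by
        calc |x| = |(x - ξ) + ξ| := by ring_nf
          _ ≤ |x - ξ| + |ξ| := abs_add_le _ _
      have hAM : |x - ξ| ≤ (b/2)*(x-ξ)^2 + 1/(2*b) := by
        have h := sq_nonneg (b * |x - ξ| - 1)
        have hsq : |x - ξ|^2 = (x - ξ)^2 := sq_abs _
        have hb2 : (0:ℝ) < 2*b := by linarith
        rw [← sub_nonneg]
        have expand : b/2*(x-ξ)^2 + 1/(2*b) - |x-ξ| = (b*|x-ξ| - 1)^2 / (2*b) := by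
          field_simp
          rw [← hsq]
          ring
        rw [expand]
        positivity
      linarith
    have h2 : |x|^k ≤ k.factorial * Real.exp ((b/2)*(x-ξ)^2 + (1/(2*b) + |ξ|)) :=
      le_trans (abs_pow_le_exp k x) (by
        have := Real.exp_le_exp.mpr h1
        have hfac : (0:ℝ) ≤ k.factorial := by positivity
        exact mul_le_mul_of_nonneg_left this hfac)
    have hnorm : ‖|x|^k * Real.exp (-b*(x-ξ)^2)‖ = |x|^k * Real.exp (-b*(x-ξ)^2) := by
      rw [Real.norm_eq_abs, abs_of_nonneg]; positivity
    rw [hnorm]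
    calc |x|^k * Real.exp (-b*(x-ξ)^2)
        ≤ (k.factorial * Real.exp ((b/2)*(x-ξ)^2 + (1/(2*b) + |ξ|))) * Real.exp (-b*(x-ξ)^2) :=
          mul_le_mul_of_nonneg_right h2 (Real.exp_pos _).le
      _ = C * Real.exp (-(b/2)*(x-ξ)^2) := by
          rw [hC, mul_assoc, mul_assoc, ← Real.exp_add, ← Real.exp_add]
          congr 2
          ring

lemma integrable_pow_gauss {b : ℝ} (hb : 0 < b) (ξ : ℝ) (k : ℕ) :
    Integrable fun x : ℝ => x^k * Real.exp (-b*(x-ξ)^2) := by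
  apply (integrable_abs_pow_gauss hb ξ k).mono'
  · apply Continuous.aestronglyMeasurable; fun_prop
  · filter_upwards with x
    rw [Real.norm_eq_abs, abs_mul, abs_of_nonneg (Real.exp_pos _).le, abs_pow]

lemma integrable_pow_gauss0 {b : ℝ} (hb : 0 < b) (k : ℕ) :
    Integrable fun x : ℝ => x^k * Real.exp (-b*x^2) := by
  have := integrable_pow_gauss hb 0 k
  simpa using this


lemma integral_odd_gauss {b : ℝ} {k : ℕ} (hk : Odd k) :
    ∫ x : ℝ, x^k * Real.exp (-b*x^2) = 0 := by
  have h1 : ∫ x : ℝ, (fun x : ℝ => x^k * Real.exp (-b*x^2)) (-x)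
      = ∫ x : ℝ, x^k * Real.exp (-b*x^2) :=
    MeasureTheory.integral_neg_eq_self (fun x : ℝ => x^k * Real.exp (-b*x^2)) volume
  simp only [hk.neg_pow, neg_sq, neg_mul] at h1
  rw [integral_neg] at h1
  simp only [neg_mul]
  linarith

lemma moment_rec {b : ℝ} (hb : 0 < b) (k : ℕ) :
    2*b* ∫ x : ℝ, x^(k+2) * Real.exp (-b*x^2)
      = (k+1 : ℝ) * ∫ x : ℝ, x^k * Real.exp (-b*x^2) := by
  have hderiv : ∀ x : ℝ, HasDerivAt (fun x : ℝ => x^(k+1) * Real.exp (-b*x^2))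
      ((k+1:ℝ) * (x^k * Real.exp (-b*x^2)) - 2*b* (x^(k+2) * Real.exp (-b*x^2))) x := by
    intro x
    have hsq : HasDerivAt (fun x : ℝ => -b*x^2) (-b*(2*x)) x := by
      have : HasDerivAt (fun x : ℝ => x^2) ((2:ℕ) * x ^ 1) x := hasDerivAt_pow 2 x
      have := this.const_mul (-b)
      refine this.congr_deriv ?_; push_cast; ring
    have he : HasDerivAt (fun x : ℝ => Real.exp (-b*x^2)) (Real.exp (-b*x^2) * (-b*(2*x))) x :=
      hsq.exp
    have hp : HasDerivAt (fun x : ℝ => x^(k+1)) ((k+1:ℕ) * x^k) x := by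
      simpa using hasDerivAt_pow (k+1) x
    have := hp.mul he
    refine this.congr_deriv ?_
    push_cast
    ring
  have hint' : Integrable (fun x : ℝ =>
      (k+1:ℝ) * (x^k * Real.exp (-b*x^2)) - 2*b* (x^(k+2) * Real.exp (-b*x^2))) volume :=
    ((integrable_pow_gauss0 hb k).const_mul _).sub ((integrable_pow_gauss0 hb (k+2)).const_mul _)
  have hint : Integrable (fun x : ℝ => x^(k+1) * Real.exp (-b*x^2)) volume :=
    integrable_pow_gauss0 hb (k+1)
  have key := integral_eq_zero_of_hasDerivAt_of_integrable hderiv hint' hint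
  rw [integral_sub ((integrable_pow_gauss0 hb k).const_mul _)
    ((integrable_pow_gauss0 hb (k+2)).const_mul _), integral_const_mul, integral_const_mul] at key
  linarith



lemma Vlb (y : ℝ) : -(1:ℝ)/4 ≤ y^4/4 - y^2/2 := by nlinarith [sq_nonneg (y^2-1)]

private lemma error_est {b η : ℝ} (ξ : ℝ) (hb : 0 < b) (hη : 0 < η) (w : ℝ → ℝ)
    (hint1 : Integrable (fun y : ℝ => w y * Real.exp (-b*(y-ξ)^2)))
    (hint2 : Integrable (fun y : ℝ => w y * (y^4/4 - y^2/2) * Real.exp (-b*(y-ξ)^2)))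
    (hint3 : Integrable (fun y : ℝ => |w y| * (y^4/4 - y^2/2)^2 * Real.exp (-b*(y-ξ)^2)))
    {h : ℝ} (h0 : 0 < h) (h1 : h ≤ 1)
    (hintW : Integrable (fun y : ℝ =>
      w y * (Real.exp (-b*(y-ξ)^2) * Real.exp (-(h*η*(y^4/4 - y^2/2)))))) :
    |(∫ y : ℝ, w y * (Real.exp (-b*(y-ξ)^2) * Real.exp (-(h*η*(y^4/4 - y^2/2)))))
        - ((∫ y : ℝ, w y * Real.exp (-b*(y-ξ)^2))
          - h*η*(∫ y : ℝ, w y * (y^4/4 - y^2/2) * Real.exp (-b*(y-ξ)^2)))|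
      ≤ h^2 * ((η^2*Real.exp (η/4)/2)
          * ∫ y : ℝ, |w y| * (y^4/4 - y^2/2)^2 * Real.exp (-b*(y-ξ)^2)) := by
  have hsub : Integrable (fun y : ℝ =>
      w y * Real.exp (-b*(y-ξ)^2) - (h*η) * (w y * (y^4/4 - y^2/2) * Real.exp (-b*(y-ξ)^2))) :=
    hint1.sub (hint2.const_mul (h*η))
  have hf : Integrable (fun y : ℝ =>
      w y * (Real.exp (-b*(y-ξ)^2) * Real.exp (-(h*η*(y^4/4 - y^2/2))))
        - (w y * Real.exp (-b*(y-ξ)^2)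
          - (h*η) * (w y * (y^4/4 - y^2/2) * Real.exp (-b*(y-ξ)^2)))) := hintW.sub hsub
  have hstep1 : (∫ y : ℝ, w y * (Real.exp (-b*(y-ξ)^2) * Real.exp (-(h*η*(y^4/4 - y^2/2)))))
        - ((∫ y : ℝ, w y * Real.exp (-b*(y-ξ)^2))
          - h*η*(∫ y : ℝ, w y * (y^4/4 - y^2/2) * Real.exp (-b*(y-ξ)^2)))
      = ∫ y : ℝ, (w y * (Real.exp (-b*(y-ξ)^2) * Real.exp (-(h*η*(y^4/4 - y^2/2))))
        - (w y * Real.exp (-b*(y-ξ)^2)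
          - (h*η) * (w y * (y^4/4 - y^2/2) * Real.exp (-b*(y-ξ)^2)))) := by
    rw [integral_sub hintW hsub, integral_sub hint1 (hint2.const_mul (h*η)),
      integral_const_mul]
  rw [hstep1]
  have hnorm := MeasureTheory.norm_integral_le_integral_norm (μ := volume)
    (fun y : ℝ => (w y * (Real.exp (-b*(y-ξ)^2) * Real.exp (-(h*η*(y^4/4 - y^2/2))))
        - (w y * Real.exp (-b*(y-ξ)^2)
          - (h*η) * (w y * (y^4/4 - y^2/2) * Real.exp (-b*(y-ξ)^2)))))
  rw [Real.norm_eq_abs] at hnorm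
  refine le_trans hnorm ?_
  have hmono : (∫ y : ℝ, ‖w y * (Real.exp (-b*(y-ξ)^2) * Real.exp (-(h*η*(y^4/4 - y^2/2))))
        - (w y * Real.exp (-b*(y-ξ)^2)
          - (h*η) * (w y * (y^4/4 - y^2/2) * Real.exp (-b*(y-ξ)^2)))‖)
      ≤ ∫ y : ℝ, (h^2*(η^2*Real.exp (η/4)/2))
          * (|w y| * (y^4/4 - y^2/2)^2 * Real.exp (-b*(y-ξ)^2)) := by
    apply integral_mono hf.norm (hint3.const_mul _)
    intro y
    have hG : (0:ℝ) < Real.exp (-b*(y-ξ)^2) := Real.exp_pos _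
    have hxlb : -(η/4) ≤ h*η*(y^4/4 - y^2/2) := by
      have hV := Vlb y
      nlinarith [mul_nonneg (mul_nonneg h0.le hη.le) (by linarith : (0:ℝ) ≤ y^4/4 - y^2/2 + 1/4),
        mul_nonneg (by linarith : (0:ℝ) ≤ 1-h) hη.le]
    have htay := exp_taylor_bound (by positivity : (0:ℝ) ≤ η/4) hxlb
    have hfact : w y * (Real.exp (-b*(y-ξ)^2) * Real.exp (-(h*η*(y^4/4 - y^2/2))))
        - (w y * Real.exp (-b*(y-ξ)^2)
          - (h*η) * (w y * (y^4/4 - y^2/2) * Real.exp (-b*(y-ξ)^2)))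
        = (w y * Real.exp (-b*(y-ξ)^2))
          * (Real.exp (-(h*η*(y^4/4 - y^2/2))) - 1 + h*η*(y^4/4 - y^2/2)) := by ring
    beta_reduce
    rw [Real.norm_eq_abs, hfact, abs_mul, abs_mul, abs_of_nonneg hG.le]
    calc |w y| * Real.exp (-b*(y-ξ)^2)
          * |Real.exp (-(h*η*(y^4/4 - y^2/2))) - 1 + h*η*(y^4/4 - y^2/2)|
        ≤ |w y| * Real.exp (-b*(y-ξ)^2)
          * ((h*η*(y^4/4 - y^2/2))^2/2 * Real.exp (η/4)) := by
          apply mul_le_mul_of_nonneg_left htay (by positivity)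
      _ = (h^2*(η^2*Real.exp (η/4)/2)) * (|w y| * (y^4/4 - y^2/2)^2 * Real.exp (-b*(y-ξ)^2)) := by
          ring
  refine le_trans hmono ?_
  rw [integral_const_mul]
  apply le_of_eq
  ring



private lemma abs_sub_le'' (a b : ℝ) : |a - b| ≤ |a| + |b| := by
  rw [sub_eq_add_neg]
  exact (abs_add_le a (-b)).trans_eq (by rw [abs_neg])

set_option maxHeartbeats 1000000 in
private lemma aux_main (b v ξ η : ℝ) (hv : 0 < v) (hη : 0 < η) (hb : 0 < b)
    (hbv : 2*b*v = 1) :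
    (fun h : ℝ =>
        (∫ y : ℝ, y * (Real.exp (-b*(y - ξ)^2) * Real.exp (-(h*η*(y^4/4 - y^2/2)))))
          / (∫ y : ℝ, Real.exp (-b*(y - ξ)^2) * Real.exp (-(h*η*(y^4/4 - y^2/2))))
          - (ξ - h*η*v*(ξ^3 + 3*v*ξ - ξ)))
      =O[nhdsWithin 0 (Set.Ioi 0)] (fun h : ℝ => h^2) := by
  -- basic integrabilities
  have hgInt : Integrable (fun y : ℝ => Real.exp (-b*(y-ξ)^2)) :=
    (integrable_exp_neg_mul_sq hb).comp_sub_right ξ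
  have hMk : ∀ k : ℕ, Integrable (fun y : ℝ => |y|^k * Real.exp (-b*(y-ξ)^2)) :=
    integrable_abs_pow_gauss hb ξ
  have hPow0 : ∀ k : ℕ, Integrable (fun x : ℝ => x^k * Real.exp (-b*x^2)) :=
    integrable_pow_gauss0 hb
  have hyg : Integrable (fun y : ℝ => y * Real.exp (-b*(y-ξ)^2)) := by
    simpa using integrable_pow_gauss hb ξ 1
  -- moments
  have hI0pos : 0 < ∫ z : ℝ, Real.exp (-b*z^2) := by
    rw [integral_gaussian]; positivity
  have hJ1 : (∫ x : ℝ, x^1 * Real.exp (-b*x^2)) = 0 := integral_odd_gauss ⟨0, rfl⟩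
  have hJ3 : (∫ x : ℝ, x^3 * Real.exp (-b*x^2)) = 0 := integral_odd_gauss ⟨1, rfl⟩
  have hJ5 : (∫ x : ℝ, x^5 * Real.exp (-b*x^2)) = 0 := integral_odd_gauss ⟨2, rfl⟩
  have hJ2 : (∫ x : ℝ, x^2 * Real.exp (-b*x^2)) = v * ∫ z : ℝ, Real.exp (-b*z^2) := by
    have h := moment_rec hb 0
    simp only [pow_zero, one_mul, Nat.cast_zero, zero_add] at h
    linear_combination v * h - (∫ x : ℝ, x^2 * Real.exp (-b*x^2)) * hbv
  have hJ4 : (∫ x : ℝ, x^4 * Real.exp (-b*x^2)) = 3*v^2 * ∫ z : ℝ, Real.exp (-b*z^2) := by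
    have h := moment_rec hb 2
    push_cast at h
    rw [hJ2] at h
    linear_combination v * h - (∫ x : ℝ, x^4 * Real.exp (-b*x^2)) * hbv
  -- shifted identities
  have hZ0 : (∫ y : ℝ, Real.exp (-b*(y-ξ)^2)) = ∫ z : ℝ, Real.exp (-b*z^2) := by
    have h := MeasureTheory.integral_add_right_eq_self (μ := volume)
      (fun y : ℝ => Real.exp (-b*(y-ξ)^2)) ξ
    simp only [add_sub_cancel_right] at h
    exact h.symm
  have hN0 : (∫ y : ℝ, y * Real.exp (-b*(y-ξ)^2)) = ξ * ∫ z : ℝ, Real.exp (-b*z^2) := by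
    have h := MeasureTheory.integral_add_right_eq_self (μ := volume)
      (fun y : ℝ => y * Real.exp (-b*(y-ξ)^2)) ξ
    simp only [add_sub_cancel_right] at h
    rw [← h]
    have hsplit : (fun x : ℝ => (x+ξ) * Real.exp (-b*x^2))
        = fun x : ℝ => x^1 * Real.exp (-b*x^2) + ξ * Real.exp (-b*x^2) := by
      funext x; ring
    rw [hsplit, integral_add (hPow0 1) ((integrable_exp_neg_mul_sq hb).const_mul ξ), hJ1,
      integral_const_mul, zero_add]
  have hKey : (∫ y : ℝ, (y - ξ) * (y^4/4 - y^2/2) * Real.exp (-b*(y-ξ)^2))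
      = v*(ξ^3 + 3*v*ξ - ξ) * ∫ z : ℝ, Real.exp (-b*z^2) := by
    have h := MeasureTheory.integral_add_right_eq_self (μ := volume)
      (fun y : ℝ => (y - ξ) * (y^4/4 - y^2/2) * Real.exp (-b*(y-ξ)^2)) ξ
    simp only [add_sub_cancel_right] at h
    rw [← h]
    have i5 := (hPow0 5).const_mul (1/4 : ℝ)
    have i4 := (hPow0 4).const_mul ξ
    have i3 := (hPow0 3).const_mul (3/2*ξ^2 - 1/2 : ℝ)
    have i2 := (hPow0 2).const_mul (ξ^3 - ξ)
    have i1 := (hPow0 1).const_mul (ξ^4/4 - ξ^2/2)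
    have k2 : Integrable (fun x : ℝ => 1/4 * (x^5 * Real.exp (-b*x^2))
        + ξ * (x^4 * Real.exp (-b*x^2))) := i5.add i4
    have k3 : Integrable (fun x : ℝ => 1/4 * (x^5 * Real.exp (-b*x^2))
        + ξ * (x^4 * Real.exp (-b*x^2))
        + (3/2*ξ^2 - 1/2) * (x^3 * Real.exp (-b*x^2))) := k2.add i3
    have k4 : Integrable (fun x : ℝ => 1/4 * (x^5 * Real.exp (-b*x^2))
        + ξ * (x^4 * Real.exp (-b*x^2))
        + (3/2*ξ^2 - 1/2) * (x^3 * Real.exp (-b*x^2))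
        + (ξ^3 - ξ) * (x^2 * Real.exp (-b*x^2))) := k3.add i2
    have hsplit : (fun x : ℝ => x * ((x+ξ)^4/4 - (x+ξ)^2/2) * Real.exp (-b*x^2))
        = fun x : ℝ => 1/4 * (x^5 * Real.exp (-b*x^2)) + ξ * (x^4 * Real.exp (-b*x^2))
          + (3/2*ξ^2 - 1/2) * (x^3 * Real.exp (-b*x^2)) + (ξ^3 - ξ) * (x^2 * Real.exp (-b*x^2))
          + (ξ^4/4 - ξ^2/2) * (x^1 * Real.exp (-b*x^2)) := by
      funext x; ring
    rw [hsplit, integral_add k4 i1, integral_add k3 i2, integral_add k2 i3, integral_add i5 i4,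
      integral_const_mul, integral_const_mul, integral_const_mul, integral_const_mul,
      integral_const_mul, hJ1, hJ2, hJ3, hJ4, hJ5]
    ring
  -- pointwise polynomial bounds
  have habs_poly : ∀ y : ℝ, |y^4/4 - y^2/2| ≤ |y|^4/4 + |y|^2/2 := by
    intro y
    have h4 : |y^4/4| = |y|^4/4 := by rw [abs_div, abs_pow]; norm_num
    have h2 : |y^2/2| = |y|^2/2 := by rw [abs_div, abs_pow]; norm_num
    calc |y^4/4 - y^2/2| ≤ |y^4/4| + |y^2/2| := abs_sub_le'' _ _
      _ = |y|^4/4 + |y|^2/2 := by rw [h4, h2]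
  have hV2b : ∀ y : ℝ, (y^4/4 - y^2/2)^2 ≤ |y|^8/16 + |y|^6/4 + |y|^4/4 := by
    intro y
    have h8 : |y|^8 = y^8 := by rw [← abs_pow]; exact abs_of_nonneg (by positivity)
    have h6 : |y|^6 = y^6 := by rw [← abs_pow]; exact abs_of_nonneg (by positivity)
    have h4 : |y|^4 = y^4 := by rw [← abs_pow]; exact abs_of_nonneg (by positivity)
    rw [h8, h6, h4]
    nlinarith [sq_nonneg (y^3)]
  -- integrability of V-weighted integrands
  have hVg : Integrable (fun y : ℝ => (y^4/4 - y^2/2) * Real.exp (-b*(y-ξ)^2)) := by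
    apply Integrable.mono' (((hMk 4).const_mul (1/4 : ℝ)).add ((hMk 2).const_mul (1/2 : ℝ)))
    · exact Continuous.aestronglyMeasurable (by fun_prop)
    · filter_upwards with y
      have hG := (Real.exp_pos (-b*(y-ξ)^2)).le
      rw [Real.norm_eq_abs, abs_mul, abs_of_nonneg hG]
      calc |y^4/4 - y^2/2| * Real.exp (-b*(y-ξ)^2)
          ≤ (|y|^4/4 + |y|^2/2) * Real.exp (-b*(y-ξ)^2) :=
            mul_le_mul_of_nonneg_right (habs_poly y) hG
        _ = 1/4*(|y|^4 * Real.exp (-b*(y-ξ)^2)) + 1/2*(|y|^2 * Real.exp (-b*(y-ξ)^2)) := by ring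
  have hyVg : Integrable (fun y : ℝ => y * (y^4/4 - y^2/2) * Real.exp (-b*(y-ξ)^2)) := by
    apply Integrable.mono' (((hMk 5).const_mul (1/4 : ℝ)).add ((hMk 3).const_mul (1/2 : ℝ)))
    · exact Continuous.aestronglyMeasurable (by fun_prop)
    · filter_upwards with y
      have hG := (Real.exp_pos (-b*(y-ξ)^2)).le
      rw [Real.norm_eq_abs, abs_mul, abs_mul, abs_of_nonneg hG]
      calc |y| * |y^4/4 - y^2/2| * Real.exp (-b*(y-ξ)^2)
          ≤ |y| * (|y|^4/4 + |y|^2/2) * Real.exp (-b*(y-ξ)^2) :=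
            mul_le_mul_of_nonneg_right
              (mul_le_mul_of_nonneg_left (habs_poly y) (abs_nonneg y)) hG
        _ = 1/4*(|y|^5 * Real.exp (-b*(y-ξ)^2)) + 1/2*(|y|^3 * Real.exp (-b*(y-ξ)^2)) := by ring
  have hV2g : Integrable (fun y : ℝ => (y^4/4 - y^2/2)^2 * Real.exp (-b*(y-ξ)^2)) := by
    apply Integrable.mono' ((((hMk 8).const_mul (1/16 : ℝ)).add ((hMk 6).const_mul (1/4 : ℝ))).add
      ((hMk 4).const_mul (1/4 : ℝ)))
    · exact Continuous.aestronglyMeasurable (by fun_prop)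
    · filter_upwards with y
      have hG := (Real.exp_pos (-b*(y-ξ)^2)).le
      rw [Real.norm_eq_abs, abs_of_nonneg (by positivity)]
      calc (y^4/4 - y^2/2)^2 * Real.exp (-b*(y-ξ)^2)
          ≤ (|y|^8/16 + |y|^6/4 + |y|^4/4) * Real.exp (-b*(y-ξ)^2) :=
            mul_le_mul_of_nonneg_right (hV2b y) hG
        _ = 1/16*(|y|^8 * Real.exp (-b*(y-ξ)^2)) + 1/4*(|y|^6 * Real.exp (-b*(y-ξ)^2))
            + 1/4*(|y|^4 * Real.exp (-b*(y-ξ)^2)) := by ring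
  have hyV2g : Integrable (fun y : ℝ => |y| * (y^4/4 - y^2/2)^2 * Real.exp (-b*(y-ξ)^2)) := by
    apply Integrable.mono' ((((hMk 9).const_mul (1/16 : ℝ)).add ((hMk 7).const_mul (1/4 : ℝ))).add
      ((hMk 5).const_mul (1/4 : ℝ)))
    · exact Continuous.aestronglyMeasurable (by fun_prop)
    · filter_upwards with y
      have hG := (Real.exp_pos (-b*(y-ξ)^2)).le
      rw [Real.norm_eq_abs, abs_of_nonneg (by positivity)]
      calc |y| * (y^4/4 - y^2/2)^2 * Real.exp (-b*(y-ξ)^2)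
          ≤ |y| * (|y|^8/16 + |y|^6/4 + |y|^4/4) * Real.exp (-b*(y-ξ)^2) :=
            mul_le_mul_of_nonneg_right
              (mul_le_mul_of_nonneg_left (hV2b y) (abs_nonneg y)) hG
        _ = 1/16*(|y|^9 * Real.exp (-b*(y-ξ)^2)) + 1/4*(|y|^7 * Real.exp (-b*(y-ξ)^2))
            + 1/4*(|y|^5 * Real.exp (-b*(y-ξ)^2)) := by ring
  -- weight bound for the perturbation factor
  have hWle : ∀ {h y : ℝ}, 0 ≤ h → h ≤ 1 →
      Real.exp (-(h*η*(y^4/4 - y^2/2))) ≤ Real.exp (η/4) := by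
    intro h y h0 h1
    apply Real.exp_le_exp.mpr
    have hV := Vlb y
    nlinarith [mul_nonneg (mul_nonneg h0 hη.le)
        (by linarith : (0:ℝ) ≤ y^4/4 - y^2/2 + 1/4),
      mul_nonneg (by linarith : (0:ℝ) ≤ 1-h) hη.le]
  have hW1 : ∀ {h : ℝ}, 0 < h → h ≤ 1 → Integrable (fun y : ℝ =>
      Real.exp (-b*(y-ξ)^2) * Real.exp (-(h*η*(y^4/4 - y^2/2)))) := by
    intro h h0 h1
    apply Integrable.mono' (hgInt.const_mul (Real.exp (η/4)))
    · exact Continuous.aestronglyMeasurable (by fun_prop)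
    · filter_upwards with y
      rw [Real.norm_eq_abs, abs_of_nonneg (by positivity)]
      calc Real.exp (-b*(y-ξ)^2) * Real.exp (-(h*η*(y^4/4 - y^2/2)))
          ≤ Real.exp (-b*(y-ξ)^2) * Real.exp (η/4) :=
            mul_le_mul_of_nonneg_left (hWle h0.le h1) (Real.exp_pos _).le
        _ = Real.exp (η/4) * Real.exp (-b*(y-ξ)^2) := mul_comm _ _
  have hWy : ∀ {h : ℝ}, 0 < h → h ≤ 1 → Integrable (fun y : ℝ =>
      y * (Real.exp (-b*(y-ξ)^2) * Real.exp (-(h*η*(y^4/4 - y^2/2))))) := by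
    intro h h0 h1
    apply Integrable.mono' ((hMk 1).const_mul (Real.exp (η/4)))
    · exact Continuous.aestronglyMeasurable (by fun_prop)
    · filter_upwards with y
      rw [Real.norm_eq_abs, abs_mul, abs_of_nonneg (by positivity :
        (0:ℝ) ≤ Real.exp (-b*(y-ξ)^2) * Real.exp (-(h*η*(y^4/4 - y^2/2))))]
      calc |y| * (Real.exp (-b*(y-ξ)^2) * Real.exp (-(h*η*(y^4/4 - y^2/2))))
          ≤ |y| * (Real.exp (-b*(y-ξ)^2) * Real.exp (η/4)) :=
            mul_le_mul_of_nonneg_left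
              (mul_le_mul_of_nonneg_left (hWle h0.le h1) (Real.exp_pos _).le) (abs_nonneg y)
        _ = Real.exp (η/4) * (|y|^1 * Real.exp (-b*(y-ξ)^2)) := by ring
  -- abbreviations
  set c := ξ^3 + 3*v*ξ - ξ with hcdef
  set I0 := ∫ z : ℝ, Real.exp (-b*z^2) with hI0def
  set A := ∫ y : ℝ, (y^4/4 - y^2/2) * Real.exp (-b*(y-ξ)^2) with hAdef
  set Bi := ∫ y : ℝ, y * (y^4/4 - y^2/2) * Real.exp (-b*(y-ξ)^2) with hBdef
  set CZ := (η^2*Real.exp (η/4)/2) * ∫ y : ℝ, |(1:ℝ)| * (y^4/4 - y^2/2)^2 * Real.exp (-b*(y-ξ)^2)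
    with hCZdef
  set CN := (η^2*Real.exp (η/4)/2) * ∫ y : ℝ, |y| * (y^4/4 - y^2/2)^2 * Real.exp (-b*(y-ξ)^2)
    with hCNdef
  have hCZ0 : 0 ≤ CZ := by
    rw [hCZdef]
    exact mul_nonneg (by positivity) (integral_nonneg (fun y => by positivity))
  have hCN0 : 0 ≤ CN := by
    rw [hCNdef]
    exact mul_nonneg (by positivity) (integral_nonneg (fun y => by positivity))
  have hBA : Bi - ξ*A = v*c*I0 := by
    rw [hBdef, hAdef, hI0def, hcdef]
    have hcomb : (∫ y : ℝ, y * (y^4/4 - y^2/2) * Real.exp (-b*(y-ξ)^2))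
        - ξ*(∫ y : ℝ, (y^4/4 - y^2/2) * Real.exp (-b*(y-ξ)^2))
        = ∫ y : ℝ, (y - ξ) * (y^4/4 - y^2/2) * Real.exp (-b*(y-ξ)^2) := by
      rw [← integral_const_mul ξ, ← integral_sub hyVg (hVg.const_mul ξ)]
      congr 1; funext y; ring
    rw [hcomb, hKey]
  set Cnum := CN + (|ξ| + η*v*|c|)*CZ + η^2*v*|c| * |A| with hCnumdef
  have hCnum0 : 0 ≤ Cnum := by
    rw [hCnumdef]
    have : (0:ℝ) ≤ |ξ| + η*v*|c| := by positivity
    have h2 : (0:ℝ) ≤ η^2*v*|c| * |A| := by positivity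
    exact add_nonneg (add_nonneg hCN0 (mul_nonneg this hCZ0)) h2
  set ε := min 1 (I0/(2*(η*|A| + CZ + 1))) with hεdef
  have hε0 : 0 < ε := by
    rw [hεdef]
    apply lt_min one_pos
    have hd : (0:ℝ) < 2*(η*|A| + CZ + 1) := by positivity
    positivity
  -- conclude
  rw [Asymptotics.isBigO_iff]
  refine ⟨Cnum/(I0/2), ?_⟩
  filter_upwards [Ioo_mem_nhdsGT_of_mem (Set.left_mem_Ico.mpr hε0)] with h hh
  obtain ⟨h0, hhε⟩ := hh
  have h1 : h ≤ 1 := le_of_lt (lt_of_lt_of_le hhε (by rw [hεdef]; exact min_le_left _ _))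
  have h2 : h < I0/(2*(η*|A| + CZ + 1)) :=
    lt_of_lt_of_le hhε (by rw [hεdef]; exact min_le_right _ _)
  beta_reduce
  -- error estimates
  have hEZ := error_est ξ hb hη (fun _ => (1:ℝ)) (by simpa using hgInt)
    (by simpa using hVg) (by simpa using hV2g) h0 h1 (by simpa using hW1 h0 h1)
  simp only [one_mul] at hEZ
  rw [hZ0, ← hAdef, ← hCZdef] at hEZ
  have hEN := error_est ξ hb hη (fun y : ℝ => y) hyg hyVg hyV2g h0 h1 (hWy h0 h1)
  rw [hN0, ← hBdef, ← hCNdef] at hEN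
  set Zh := ∫ y : ℝ, Real.exp (-b*(y-ξ)^2) * Real.exp (-(h*η*(y^4/4 - y^2/2))) with hZhdef
  set Nh := ∫ y : ℝ, y * (Real.exp (-b*(y-ξ)^2) * Real.exp (-(h*η*(y^4/4 - y^2/2)))) with hNhdef
  -- denominator lower bound
  have hZlow : I0/2 ≤ Zh := by
    have e1 := (abs_le.mp hEZ).1
    have e2 : h*η*A ≤ h*(η*|A|) := by
      calc h*η*A ≤ h*η*|A| :=
            mul_le_mul_of_nonneg_left (le_abs_self A) (by positivity)
        _ = h*(η*|A|) := by ring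
    have e3 : h^2*CZ ≤ h*CZ := by
      nlinarith [mul_nonneg (mul_nonneg h0.le (by linarith : (0:ℝ) ≤ 1-h)) hCZ0]
    have hd : (0:ℝ) < 2*(η*|A| + CZ + 1) := by positivity
    have e4 : h * (2*(η*|A| + CZ + 1)) < I0 := (lt_div_iff₀ hd).mp h2
    nlinarith
  have hZpos : 0 < Zh := lt_of_lt_of_le (by positivity) hZlow
  -- numerator identity and bound
  have hid : Nh - (ξ - h*η*v*c)*Zh
      = (Nh - (ξ*I0 - h*η*Bi)) - (ξ - h*η*v*c)*(Zh - (I0 - h*η*A)) - h^2*η^2*v*c*A := by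
    linear_combination (-(h*η))*hBA
  have ht : |ξ - h*η*v*c| ≤ |ξ| + η*v*|c| := by
    calc |ξ - h*η*v*c| ≤ |ξ| + |h*η*v*c| := abs_sub_le'' _ _
      _ = |ξ| + h*η*v*|c| := by
          rw [abs_mul, abs_mul, abs_mul, abs_of_pos h0, abs_of_pos hη, abs_of_pos hv]
      _ ≤ |ξ| + η*v*|c| := by
          nlinarith [mul_nonneg (mul_nonneg
            (mul_nonneg (by linarith : (0:ℝ) ≤ 1-h) hη.le) hv.le) (abs_nonneg c)]
  have hnum : |Nh - (ξ - h*η*v*c)*Zh| ≤ h^2 * Cnum := by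
    rw [hid]
    have step1 : |(Nh - (ξ*I0 - h*η*Bi)) - (ξ - h*η*v*c)*(Zh - (I0 - h*η*A)) - h^2*η^2*v*c*A|
        ≤ |Nh - (ξ*I0 - h*η*Bi)| + |(ξ - h*η*v*c)*(Zh - (I0 - h*η*A))| + |h^2*η^2*v*c*A| := by
      calc |(Nh - (ξ*I0 - h*η*Bi)) - (ξ - h*η*v*c)*(Zh - (I0 - h*η*A)) - h^2*η^2*v*c*A|
          ≤ |(Nh - (ξ*I0 - h*η*Bi)) - (ξ - h*η*v*c)*(Zh - (I0 - h*η*A))| + |h^2*η^2*v*c*A| :=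
            abs_sub_le'' _ _
        _ ≤ |Nh - (ξ*I0 - h*η*Bi)| + |(ξ - h*η*v*c)*(Zh - (I0 - h*η*A))| + |h^2*η^2*v*c*A| := by
            have := abs_sub_le'' (Nh - (ξ*I0 - h*η*Bi)) ((ξ - h*η*v*c)*(Zh - (I0 - h*η*A)))
            linarith
    refine le_trans step1 ?_
    have p2 : |(ξ - h*η*v*c)*(Zh - (I0 - h*η*A))| ≤ (|ξ| + η*v*|c|)*(h^2*CZ) := by
      rw [abs_mul]
      exact mul_le_mul ht hEZ (abs_nonneg _) (by positivity)
    have p3 : |h^2*η^2*v*c*A| = h^2*(η^2*v*|c| * |A|) := by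
      rw [abs_mul, abs_mul, abs_mul, abs_mul, abs_of_nonneg (sq_nonneg h),
        abs_of_nonneg (sq_nonneg η), abs_of_pos hv]
      ring
    rw [hCnumdef, p3]
    linarith [hEN, p2]
  -- final assembly
  rw [Real.norm_eq_abs, Real.norm_eq_abs]
  have hrw : Nh/Zh - (ξ - h*η*v*c) = (Nh - (ξ - h*η*v*c)*Zh)/Zh := by
    field_simp
  rw [hrw, abs_div, abs_of_pos hZpos, abs_of_nonneg (sq_nonneg h)]
  calc |Nh - (ξ - h*η*v*c)*Zh| / Zh ≤ (h^2 * Cnum)/(I0/2) := by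
        apply div_le_div₀ (by positivity) hnum (by positivity) hZlow
    _ = Cnum/(I0/2) * h^2 := by ring

open Filter Asymptotics

/-- With `η = 2/σ²`, `V(y) = y⁴/4 − y²/2`,
`Z(h) = ∫ exp(−(y−ξ)²/(2v) − hηV(y)) dy` and
`m(h) = Z(h)⁻¹ ∫ y exp(−(y−ξ)²/(2v) − hηV(y)) dy`, one has as `h → 0⁺`:
`m(h) = ξ − hηv(ξ³ + 3vξ − ξ) + O(h²)`. -/
theorem stmt_8 (σ v ξ : ℝ) (hσ : 0 < σ) (hv : 0 < v) :
    (fun h : ℝ =>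
        (∫ y : ℝ, y * Real.exp (-(y - ξ) ^ 2 / (2 * v)
            - h * (2 / σ ^ 2) * (y ^ 4 / 4 - y ^ 2 / 2)))
          / (∫ y : ℝ, Real.exp (-(y - ξ) ^ 2 / (2 * v)
            - h * (2 / σ ^ 2) * (y ^ 4 / 4 - y ^ 2 / 2)))
        - (ξ - h * (2 / σ ^ 2) * v * (ξ ^ 3 + 3 * v * ξ - ξ)))
      =O[nhdsWithin 0 (Set.Ioi 0)] (fun h : ℝ => h ^ 2) := by
  have hη : (0:ℝ) < 2/σ^2 := by positivity
  have hb : (0:ℝ) < 1/(2*v) := by positivity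
  have hbv : 2*(1/(2*v))*v = 1 := by field_simp
  have haux := aux_main (1/(2*v)) v ξ (2/σ^2) hv hη hb hbv
  have hfun_eq : (fun h : ℝ =>
        (∫ y : ℝ, y * Real.exp (-(y - ξ) ^ 2 / (2 * v)
            - h * (2 / σ ^ 2) * (y ^ 4 / 4 - y ^ 2 / 2)))
          / (∫ y : ℝ, Real.exp (-(y - ξ) ^ 2 / (2 * v)
            - h * (2 / σ ^ 2) * (y ^ 4 / 4 - y ^ 2 / 2)))
        - (ξ - h * (2 / σ ^ 2) * v * (ξ ^ 3 + 3 * v * ξ - ξ)))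
      = (fun h : ℝ =>
        (∫ y : ℝ, y * (Real.exp (-(1/(2*v))*(y - ξ)^2)
            * Real.exp (-(h*(2/σ^2)*(y^4/4 - y^2/2)))))
          / (∫ y : ℝ, Real.exp (-(1/(2*v))*(y - ξ)^2)
            * Real.exp (-(h*(2/σ^2)*(y^4/4 - y^2/2))))
          - (ξ - h*(2/σ^2)*v*(ξ^3 + 3*v*ξ - ξ))) := by
    funext h
    have hden : (∫ y : ℝ, Real.exp (-(y - ξ) ^ 2 / (2 * v)
          - h * (2 / σ ^ 2) * (y ^ 4 / 4 - y ^ 2 / 2)))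
        = ∫ y : ℝ, Real.exp (-(1/(2*v))*(y - ξ)^2)
            * Real.exp (-(h*(2/σ^2)*(y^4/4 - y^2/2))) := by
      congr 1
      funext y
      rw [← Real.exp_add]
      congr 1
      ring
    have hnum : (∫ y : ℝ, y * Real.exp (-(y - ξ) ^ 2 / (2 * v)
          - h * (2 / σ ^ 2) * (y ^ 4 / 4 - y ^ 2 / 2)))
        = ∫ y : ℝ, y * (Real.exp (-(1/(2*v))*(y - ξ)^2)
            * Real.exp (-(h*(2/σ^2)*(y^4/4 - y^2/2)))) := by
      congr 1
      funext y
      rw [← Real.exp_add]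
      congr 2
      ring
    rw [hnum, hden]
  rw [hfun_eq]
  exact haux
end

section
/- Let K ≥ 1, ρ_1,…,ρ_K > 0 with ∑ρ_k = 1, α_1,…,α_K ∈ ℝ with ∑ρ_kα_k = 0, θ̄ > 0, and t ≥ 0. For δ ∈ ℝ let M_δ be the K×K matrix with entries (M_δ)_{ij} = −θ̄(1 + δα_i)(δ_{ij} − ρ_j), let ϱ = (ρ_1,…,ρ_K) and R = diag(ρ_1,…,ρ_K). Then, as δ → 0, ϱᵀ·exp(t·M_δ)·R^{−1}·exp(t·M_δ)ᵀ·ϱ = 1 + δ²·(1 − e^{−θ̄t})²·(∑_{k=1}^K ρ_k α_k²) + O(δ³). -/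
open Matrix Filter Asymptotics

open NormedSpace

section LocalInstances

attribute [local instance] Matrix.linftyOpNormedAddCommGroup Matrix.linftyOpNormedRing
  Matrix.linftyOpNormedAlgebra Matrix.linfty_opNormOneClass

section Helpers
variable {𝔸 : Type*} [NormedRing 𝔸] [NormedAlgebra ℝ 𝔸] [CompleteSpace 𝔸] [NormOneClass 𝔸]

lemma hpow_norm_le (x : 𝔸) {C : ℝ} (hx : ‖x‖ ≤ C) (hC : (1:ℝ) ≤ C) (n : ℕ) :
    ‖x ^ n‖ ≤ C ^ n := by
  induction n with
  | zero => simpa using hC.trans_eq (pow_zero C).symm |>.le -- fix later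
  | succ n ih =>
      calc ‖x ^ (n+1)‖ = ‖x ^ n * x‖ := by rw [pow_succ]
      _ ≤ ‖x ^ n‖ * ‖x‖ := norm_mul_le _ _
      _ ≤ C ^ n * C := by
          exact mul_le_mul ih hx (norm_nonneg x) (pow_nonneg (le_trans zero_le_one hC) n)
      _ = C ^ (n+1) := (pow_succ C n).symm

lemma hpow_sub_norm_le (x y : 𝔸) {C : ℝ} (hx : ‖x‖ ≤ C) (hy : ‖y‖ ≤ C) (hC : (1:ℝ) ≤ C)
    (n : ℕ) : ‖x ^ n - y ^ n‖ ≤ n * C ^ n * ‖x - y‖ := by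
  induction n with
  | zero => simp
  | succ n ih =>
      have h0 : (0:ℝ) ≤ C := le_trans zero_le_one hC
      have key : x ^ (n+1) - y ^ (n+1) = x ^ n * (x - y) + (x ^ n - y ^ n) * y := by
        rw [pow_succ, pow_succ]; noncomm_ring
      calc ‖x ^ (n+1) - y ^ (n+1)‖
          = ‖x ^ n * (x - y) + (x ^ n - y ^ n) * y‖ := by rw [key]
        _ ≤ ‖x ^ n * (x - y)‖ + ‖(x ^ n - y ^ n) * y‖ := norm_add_le _ _
        _ ≤ ‖x ^ n‖ * ‖x - y‖ + ‖x ^ n - y ^ n‖ * ‖y‖ :=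
            add_le_add (norm_mul_le _ _) (norm_mul_le _ _)
        _ ≤ C ^ n * ‖x - y‖ + (n * C ^ n * ‖x - y‖) * C :=
            add_le_add (mul_le_mul_of_nonneg_right (hpow_norm_le x hx hC n) (norm_nonneg _))
              (mul_le_mul ih hy (norm_nonneg _) (mul_nonneg (mul_nonneg (Nat.cast_nonneg n) (pow_nonneg h0 n)) (norm_nonneg _)))
        _ = C ^ n * ‖x - y‖ + n * C ^ (n+1) * ‖x - y‖ := by rw [pow_succ]; ring
        _ ≤ C ^ (n+1) * ‖x - y‖ + n * C ^ (n+1) * ‖x - y‖ := by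
            have h1 : C ^ n ≤ C ^ (n+1) := pow_le_pow_right₀ hC (Nat.le_succ n)
            have h2 := norm_nonneg (x - y)
            have h3 : (0:ℝ) ≤ (n:ℝ) := Nat.cast_nonneg n
            nlinarith
        _ = (n+1 : ℕ) * C ^ (n+1) * ‖x - y‖ := by push_cast; ring

lemma hG_summable (x : 𝔸) :
    Summable fun n : ℕ => ((Nat.factorial (n+1) : ℝ))⁻¹ • x ^ n := by
  set C := max 1 ‖x‖ with hC
  have hC1 : (1:ℝ) ≤ C := le_max_left _ _
  apply Summable.of_norm_bounded (g := fun n => C ^ n / Nat.factorial n)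
    (Real.summable_pow_div_factorial C)
  intro n
  rw [norm_smul]
  have h1 : ‖x ^ n‖ ≤ C ^ n := hpow_norm_le x (le_max_right _ _) hC1 n
  have h2 : ‖((Nat.factorial (n+1) : ℝ))⁻¹‖ ≤ ((Nat.factorial n : ℝ))⁻¹ := by
    rw [Real.norm_eq_abs, abs_of_nonneg (by positivity)]
    apply inv_anti₀ (by positivity)
    exact_mod_cast Nat.factorial_le (Nat.le_succ n)
  calc ‖((Nat.factorial (n+1) : ℝ))⁻¹‖ * ‖x ^ n‖ ≤ ((Nat.factorial n : ℝ))⁻¹ * C ^ n :=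
        mul_le_mul h2 h1 (norm_nonneg _) (by positivity)
    _ = C ^ n / Nat.factorial n := by ring

lemma hexp_eq (x : 𝔸) :
    exp x = 1 + (∑' n : ℕ, ((Nat.factorial (n+1) : ℝ))⁻¹ • x ^ n) * x := by
  simp only [NormedSpace.exp_eq_tsum ℝ]
  rw [Summable.tsum_eq_zero_add (NormedSpace.expSeries_summable' (𝕂 := ℝ) x)]
  congr 1
  · simp
  · rw [← (hG_summable x).tsum_mul_right x]
    congr 1; ext n
    rw [pow_succ, smul_mul_assoc]

lemma hG_lip (x y : 𝔸) {C : ℝ} (hx : ‖x‖ ≤ C) (hy : ‖y‖ ≤ C) (hC : (1:ℝ) ≤ C) :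
    ‖(∑' n : ℕ, ((Nat.factorial (n+1) : ℝ))⁻¹ • x ^ n)
        - ∑' n : ℕ, ((Nat.factorial (n+1) : ℝ))⁻¹ • y ^ n‖
      ≤ (∑' n : ℕ, C ^ n / Nat.factorial n) * ‖x - y‖ := by
  rw [← Summable.tsum_sub (hG_summable x) (hG_summable y)]
  have hterm : ∀ n : ℕ, ‖((Nat.factorial (n+1) : ℝ))⁻¹ • x ^ n
      - ((Nat.factorial (n+1) : ℝ))⁻¹ • y ^ n‖ ≤ (C ^ n / Nat.factorial n) * ‖x - y‖ := by
    intro n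
    rw [← smul_sub, norm_smul, Real.norm_eq_abs, abs_of_nonneg (by positivity)]
    have hb := hpow_sub_norm_le x y hx hy hC n
    have hfrac : ((n:ℝ)) * ((Nat.factorial (n+1) : ℝ))⁻¹ ≤ ((Nat.factorial n : ℝ))⁻¹ := by
      have h2 : ((Nat.factorial (n+1) : ℝ)) = ((n:ℝ)+1) * (Nat.factorial n : ℝ) := by
        rw [Nat.factorial_succ]; push_cast; ring
      rw [h2, mul_inv]
      calc (n:ℝ) * (((n:ℝ)+1)⁻¹ * ((Nat.factorial n : ℝ))⁻¹)
          = ((n:ℝ) * ((n:ℝ)+1)⁻¹) * ((Nat.factorial n : ℝ))⁻¹ := by ring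
        _ ≤ 1 * ((Nat.factorial n : ℝ))⁻¹ := by
            apply mul_le_mul_of_nonneg_right _ (by positivity)
            rw [← div_eq_mul_inv, div_le_one (by positivity)]; linarith
        _ = ((Nat.factorial n : ℝ))⁻¹ := one_mul _
    have h0C : (0:ℝ) ≤ C := le_trans zero_le_one hC
    calc ((Nat.factorial (n+1) : ℝ))⁻¹ * ‖x ^ n - y ^ n‖
        ≤ ((Nat.factorial (n+1) : ℝ))⁻¹ * (n * C ^ n * ‖x - y‖) := by
          exact mul_le_mul_of_nonneg_left hb (by positivity)
      _ = ((n:ℝ) * ((Nat.factorial (n+1) : ℝ))⁻¹) * (C ^ n * ‖x - y‖) := by ring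
      _ ≤ ((Nat.factorial n : ℝ))⁻¹ * (C ^ n * ‖x - y‖) := by
          exact mul_le_mul_of_nonneg_right hfrac
            (mul_nonneg (pow_nonneg h0C n) (norm_nonneg _))
      _ = (C ^ n / Nat.factorial n) * ‖x - y‖ := by ring
  exact tsum_of_norm_bounded
    (((Real.summable_pow_div_factorial C).hasSum).mul_right ‖x - y‖) hterm

end Helpers

section MatrixHelpers
variable {K : ℕ} [NeZero K]

local notation "𝕄" => Matrix (Fin K) (Fin K) ℝ

/-- `A ↦ A.mulVec v` as a continuous linear map. -/
noncomputable def mulVecCLM (v : Fin K → ℝ) : 𝕄 →L[ℝ] (Fin K → ℝ) :=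
  LinearMap.toContinuousLinearMap
    { toFun := fun A => A.mulVec v
      map_add' := fun A B => Matrix.add_mulVec A B v
      map_smul' := fun c A => Matrix.smul_mulVec c A v }

lemma mulVecCLM_apply (v : Fin K → ℝ) (A : 𝕄) : mulVecCLM v A = A.mulVec v := rfl

lemma tsum_mulVec {f : ℕ → 𝕄} (hf : Summable f) (v : Fin K → ℝ) :
    (∑' n, f n).mulVec v = ∑' n, (f n).mulVec v := by
  have := (mulVecCLM v).map_tsum hf
  simpa [mulVecCLM_apply] using this

lemma pow_mulVec_eigen {x : 𝕄} {v : Fin K → ℝ} {r : ℝ} (h : x.mulVec v = r • v) (n : ℕ) :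
    (x ^ n).mulVec v = r ^ n • v := by
  induction n with
  | zero => simp [Matrix.one_mulVec]
  | succ n ih =>
      rw [pow_succ, ← Matrix.mulVec_mulVec, h, Matrix.mulVec_smul, ih, pow_succ, smul_smul,
        mul_comm]

lemma exp_mulVec (x : 𝕄) (v : Fin K → ℝ) :
    (NormedSpace.exp x).mulVec v = ∑' n : ℕ, ((Nat.factorial n : ℝ))⁻¹ • (x ^ n).mulVec v := by
  simp only [NormedSpace.exp_eq_tsum ℝ]
  rw [tsum_mulVec (NormedSpace.expSeries_summable' (𝕂 := ℝ) x) v]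
  exact tsum_congr fun n => Matrix.smul_mulVec _ _ _

lemma exp_mulVec_kernel {x : 𝕄} {v : Fin K → ℝ} (h : x.mulVec v = 0) :
    (NormedSpace.exp x).mulVec v = v := by
  rw [exp_mulVec]
  have h0 : x.mulVec v = (0:ℝ) • v := by simpa using h
  rw [tsum_eq_single 0 (fun n hn => ?_)]
  · simp [Matrix.one_mulVec]
  · rw [pow_mulVec_eigen h0 n, zero_pow hn]
    simp

lemma G_mulVec (x : 𝕄) (v : Fin K → ℝ) :
    (∑' n : ℕ, ((Nat.factorial (n+1) : ℝ))⁻¹ • x ^ n).mulVec v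
      = ∑' n : ℕ, ((Nat.factorial (n+1) : ℝ))⁻¹ • (x ^ n).mulVec v := by
  rw [tsum_mulVec (hG_summable x) v]
  exact tsum_congr fun n => Matrix.smul_mulVec _ _ _

lemma G_mulVec_eigen {x : 𝕄} {v : Fin K → ℝ} {r : ℝ} (h : x.mulVec v = r • v) :
    (∑' n : ℕ, ((Nat.factorial (n+1) : ℝ))⁻¹ • x ^ n).mulVec v
      = (∑' n : ℕ, ((Nat.factorial (n+1) : ℝ))⁻¹ * r ^ n) • v := by
  rw [G_mulVec]
  have : ∀ n : ℕ, ((Nat.factorial (n+1) : ℝ))⁻¹ • (x ^ n).mulVec v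
      = (((Nat.factorial (n+1) : ℝ))⁻¹ * r ^ n) • v := by
    intro n; rw [pow_mulVec_eigen h n, smul_smul]
  rw [tsum_congr this]
  exact Summable.tsum_smul_const (by simpa using hG_summable (𝔸 := ℝ) r) v

end MatrixHelpers

end LocalInstances




/-- Small-diversity expansion of the quadratic form: with group fractions
`ρ_k > 0` summing to 1, centered perturbations `∑ ρ_kα_k = 0`, `θ̄ > 0`, `t ≥ 0`,
drift matrices `(M_δ)_{ij} = −θ̄(1 + δα_i)(δ_{ij} − ρ_j)` and `R = diag(ρ)`:
`ϱᵀ e^{tM_δ} R⁻¹ (e^{tM_δ})ᵀ ϱ = 1 + δ²(1 − e^{−θ̄t})²(∑ ρ_kα_k²) + O(δ³)`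
as `δ → 0`. -/
theorem stmt_17 (K : ℕ) (hK : 1 ≤ K) (ρ α : Fin K → ℝ)
    (hρ : ∀ k, 0 < ρ k) (hsum : ∑ k, ρ k = 1) (hcen : ∑ k, ρ k * α k = 0)
    (θ : ℝ) (hθ : 0 < θ) (t : ℝ) (ht : 0 ≤ t)
    (M : ℝ → Matrix (Fin K) (Fin K) ℝ)
    (hM : ∀ δ : ℝ, M δ = Matrix.of fun i j =>
      -θ * (1 + δ * α i) * ((if i = j then (1:ℝ) else 0) - ρ j))
    (R : Matrix (Fin K) (Fin K) ℝ) (hR : R = Matrix.diagonal ρ) :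
    (fun δ : ℝ =>
        ρ ⬝ᵥ (NormedSpace.exp (t • M δ) * R⁻¹
            * (NormedSpace.exp (t • M δ))ᵀ).mulVec ρ
          - (1 + δ ^ 2 * (1 - Real.exp (-(θ * t))) ^ 2 * ∑ k, ρ k * α k ^ 2))
      =O[nhds 0] (fun δ : ℝ => δ ^ 3) := by
  haveI : NeZero K := ⟨by omega⟩
  letI : NormedAddCommGroup (Matrix (Fin K) (Fin K) ℝ) := Matrix.linftyOpNormedAddCommGroup
  letI : NormedRing (Matrix (Fin K) (Fin K) ℝ) := Matrix.linftyOpNormedRing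
  letI : NormedAlgebra ℝ (Matrix (Fin K) (Fin K) ℝ) := Matrix.linftyOpNormedAlgebra
  letI : NormOneClass (Matrix (Fin K) (Fin K) ℝ) := Matrix.linfty_opNormOneClass
  -- abbreviations
  obtain ⟨u, hu⟩ : ∃ u : Fin K → ℝ, u = fun k => ρ k * α k := ⟨_, rfl⟩
  obtain ⟨r, hr⟩ : ∃ r : ℝ, r = -(θ * t) := ⟨_, rfl⟩
  obtain ⟨B, hB⟩ : ∃ B : ℝ → Matrix (Fin K) (Fin K) ℝ, B = fun δ => (t • M δ)ᵀ := ⟨_, rfl⟩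
  obtain ⟨S, hSdef⟩ : ∃ S : Matrix (Fin K) (Fin K) ℝ, S = B 1 - B 0 := ⟨_, rfl⟩
  obtain ⟨G, hGdef⟩ : ∃ G : ℝ → Matrix (Fin K) (Fin K) ℝ,
      G = fun δ => ∑' n : ℕ, ((Nat.factorial (n+1) : ℝ))⁻¹ • (B δ) ^ n := ⟨_, rfl⟩
  obtain ⟨z, hzdef⟩ : ∃ z : ℝ → (Fin K → ℝ), z = fun δ => (G δ).mulVec (r • u) := ⟨_, rfl⟩
  obtain ⟨y, hydef⟩ : ∃ y : ℝ → (Fin K → ℝ),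
      y = fun δ => (NormedSpace.exp (B δ)).mulVec ρ := ⟨_, rfl⟩
  -- the inverse of R
  have hRinv : R⁻¹ = Matrix.diagonal fun k => (ρ k)⁻¹ := by
    rw [hR]
    apply Matrix.inv_eq_right_inv
    rw [Matrix.diagonal_mul_diagonal]
    convert Matrix.diagonal_one with k
    exact mul_inv_cancel₀ (hρ k).ne'
  -- entry formula for B
  have hBentry : ∀ δ i j, B δ i j
      = t * (-θ * (1 + δ * α j) * ((if j = i then (1:ℝ) else 0) - ρ i)) := by
    intro δ i j
    simp only [hB]
    rw [hM]
    rfl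
  -- affine structure
  have hBaffine : ∀ δ : ℝ, B δ = B 0 + δ • S := by
    intro δ
    ext i j
    rw [hSdef]
    simp only [Matrix.add_apply, Matrix.smul_apply, Matrix.sub_apply, hBentry, smul_eq_mul]
    ring
  -- B acting on ρ
  have hBρ : ∀ δ : ℝ, (B δ).mulVec ρ = δ • (r • u) := by
    intro δ
    funext j
    simp only [Matrix.mulVec, dotProduct, hBentry]
    have hsplit : ∀ i : Fin K,
        t * (-θ * (1 + δ * α i) * ((if i = j then (1:ℝ) else 0) - ρ j)) * ρ i
          = (if i = j then t * (-θ * (1 + δ * α i)) * ρ i else 0)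
            + (θ * t * ρ j) * (ρ i + δ * (ρ i * α i)) := by
      intro i; by_cases h : i = j <;> [skip; skip] <;> first
      | (rw [if_pos h, if_pos h]; ring)
      | (rw [if_neg h, if_neg h]; ring)
    rw [Finset.sum_congr rfl fun i _ => hsplit i, Finset.sum_add_distrib,
      Finset.sum_ite_eq' Finset.univ j]
    simp only [Finset.mem_univ, if_true]
    rw [← Finset.mul_sum]
    have hsum2 : ∑ i, (ρ i + δ * (ρ i * α i)) = 1 := by
      rw [Finset.sum_add_distrib, hsum, ← Finset.mul_sum]
      have : ∑ i, ρ i * α i = 0 := hcen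
      rw [this]; ring
    rw [hsum2]
    simp only [Pi.smul_apply, smul_eq_mul, hu, hr]
    ring
  -- row sums of transpose vanish
  have hB1 : ∀ δ : ℝ, ((B δ)ᵀ).mulVec (fun _ => (1:ℝ)) = 0 := by
    intro δ
    funext i
    simp only [Matrix.mulVec, dotProduct, Matrix.transpose_apply, hBentry, mul_one]
    have hc : ∀ j : Fin K, t * (-θ * (1 + δ * α i) * ((if i = j then (1:ℝ) else 0) - ρ j))
        = (if i = j then t * (-θ * (1 + δ * α i)) else 0)
          - (t * (-θ * (1 + δ * α i))) * ρ j := by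
      intro j; by_cases h : i = j <;> first
      | (rw [if_pos h, if_pos h]; ring)
      | (rw [if_neg h, if_neg h]; ring)
    rw [Finset.sum_congr rfl fun j _ => hc j, Finset.sum_sub_distrib, Finset.sum_ite_eq,
      ← Finset.mul_sum, hsum]
    simp
  -- eigenvector
  have hBu : (B 0).mulVec u = r • u := by
    funext j
    simp only [Matrix.mulVec, dotProduct, hBentry, hu]
    have hsplit : ∀ i : Fin K,
        t * (-θ * (1 + 0 * α i) * ((if i = j then (1:ℝ) else 0) - ρ j)) * (ρ i * α i)
          = (if i = j then -(θ * t) * (ρ i * α i) else 0)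
            + (θ * t * ρ j) * (ρ i * α i) := by
      intro i; by_cases h : i = j <;> [skip; skip] <;> first
      | (rw [if_pos h, if_pos h]; ring)
      | (rw [if_neg h, if_neg h]; ring)
    rw [Finset.sum_congr rfl fun i _ => hsplit i, Finset.sum_add_distrib,
      Finset.sum_ite_eq' Finset.univ j, ← Finset.mul_sum, hcen]
    simp only [Finset.mem_univ, if_true, Pi.smul_apply, smul_eq_mul, hr]
    ring
  -- expansion of y
  have hyz : ∀ δ : ℝ, y δ = ρ + δ • z δ := by
    intro δ
    rw [hydef, hzdef, hGdef]
    simp only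
    erw [hexp_eq (B δ)]
    rw [Matrix.add_mulVec, Matrix.one_mulVec, ← Matrix.mulVec_mulVec,
      hBρ δ, Matrix.mulVec_smul]
    rfl
  -- sum of entries of y is 1
  have hysum : ∀ δ : ℝ, ∑ k, y δ k = 1 := by
    intro δ
    rw [hydef]
    simp only []
    have e1 : ∑ k, ((NormedSpace.exp (B δ)).mulVec ρ) k
        = (fun _ => (1:ℝ)) ⬝ᵥ ((NormedSpace.exp (B δ)).mulVec ρ) := by
      simp [dotProduct]
    rw [e1, Matrix.dotProduct_mulVec, ← Matrix.mulVec_transpose, ← Matrix.exp_transpose,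
      exp_mulVec_kernel (hB1 δ)]
    simp [dotProduct, hsum]
  -- sum of entries of z vanishes for δ ≠ 0
  have hzsum : ∀ δ : ℝ, δ ≠ 0 → ∑ k, z δ k = 0 := by
    intro δ hδ
    have h1 := hysum δ
    rw [hyz δ] at h1
    simp only [Pi.add_apply, Pi.smul_apply, smul_eq_mul, Finset.sum_add_distrib,
      ← Finset.mul_sum, hsum] at h1
    have : δ * ∑ k, z δ k = 0 := by linarith
    rcases mul_eq_zero.mp this with h | h
    · exact absurd h hδ
    · exact h
  -- value of z at 0
  have hz0 : z 0 = (Real.exp r - 1) • u := by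
    rw [hzdef, hGdef]
    simp only []
    rw [Matrix.mulVec_smul, G_mulVec_eigen hBu, smul_smul]
    congr 1
    have hexpr := hexp_eq (𝔸 := ℝ) r
    rw [← Real.exp_eq_exp_ℝ] at hexpr
    simp only [smul_eq_mul] at hexpr
    rw [hexpr]; ring
  -- quadratic form rewrite
  have hquad : ∀ δ : ℝ,
      ρ ⬝ᵥ (NormedSpace.exp (t • M δ) * R⁻¹ * (NormedSpace.exp (t • M δ))ᵀ).mulVec ρ
        = y δ ⬝ᵥ R⁻¹.mulVec (y δ) := by
    intro δ
    have hET : (NormedSpace.exp (t • M δ))ᵀ = NormedSpace.exp (B δ) := by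
      simp only [hB]
      exact (Matrix.exp_transpose (t • M δ)).symm
    rw [Matrix.mul_assoc, ← Matrix.mulVec_mulVec, Matrix.dotProduct_mulVec,
      ← Matrix.mulVec_transpose, ← Matrix.mulVec_mulVec, hET]
    simp only [hydef]
  -- diagonal quadratic form
  have hQdiag : ∀ a b : Fin K → ℝ, a ⬝ᵥ R⁻¹.mulVec b = ∑ k, a k * ((ρ k)⁻¹ * b k) := by
    intro a b
    rw [hRinv]
    simp [dotProduct, Matrix.mulVec_diagonal]
  have hQρρ : ρ ⬝ᵥ R⁻¹.mulVec ρ = 1 := by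
    rw [hQdiag]
    have : ∀ k : Fin K, ρ k * ((ρ k)⁻¹ * ρ k) = ρ k := by
      intro k; field_simp
    rw [Finset.sum_congr rfl fun k _ => this k, hsum]
  have hQzρ : ∀ x : Fin K → ℝ, x ⬝ᵥ R⁻¹.mulVec ρ = ∑ k, x k := by
    intro x
    rw [hQdiag]
    refine Finset.sum_congr rfl fun k _ => ?_
    have hk := (hρ k).ne'
    field_simp
  have hQρz : ∀ x : Fin K → ℝ, ρ ⬝ᵥ R⁻¹.mulVec x = ∑ k, x k := by
    intro x
    rw [hQdiag]
    refine Finset.sum_congr rfl fun k _ => ?_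
    have hk := (hρ k).ne'
    rw [← mul_assoc, mul_inv_cancel₀ hk, one_mul]
  -- bilinear bound
  have hQbound : ∀ a b : Fin K → ℝ,
      |a ⬝ᵥ R⁻¹.mulVec b| ≤ (∑ k, (ρ k)⁻¹) * ‖a‖ * ‖b‖ := by
    intro a b
    rw [hQdiag]
    refine (Finset.abs_sum_le_sum_abs _ _).trans ?_
    have hterm : ∀ k : Fin K, |a k * ((ρ k)⁻¹ * b k)| ≤ (ρ k)⁻¹ * ‖a‖ * ‖b‖ := by
      intro k
      have h1 : |a k| ≤ ‖a‖ := by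
        simpa [Real.norm_eq_abs] using norm_le_pi_norm a k
      have h2 : |b k| ≤ ‖b‖ := by
        simpa [Real.norm_eq_abs] using norm_le_pi_norm b k
      have h3 : (0:ℝ) ≤ (ρ k)⁻¹ := inv_nonneg.mpr (hρ k).le
      have habs : |a k * ((ρ k)⁻¹ * b k)| = |a k| * ((ρ k)⁻¹ * |b k|) := by
        rw [abs_mul, abs_mul, abs_of_nonneg h3]
      rw [habs]
      calc |a k| * ((ρ k)⁻¹ * |b k|) ≤ ‖a‖ * ((ρ k)⁻¹ * ‖b‖) := by
            apply mul_le_mul h1 (mul_le_mul_of_nonneg_left h2 h3)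
              (mul_nonneg h3 (abs_nonneg _)) (norm_nonneg _)
        _ = (ρ k)⁻¹ * ‖a‖ * ‖b‖ := by ring
    exact (Finset.sum_le_sum fun k _ => hterm k).trans_eq (by rw [← Finset.sum_mul,
      ← Finset.sum_mul])
  -- expansion of the quadratic form in δ
  have hfexp : ∀ δ : ℝ, y δ ⬝ᵥ R⁻¹.mulVec (y δ)
      = 1 + δ * (∑ k, z δ k) + δ * (∑ k, z δ k)
        + δ^2 * (z δ ⬝ᵥ R⁻¹.mulVec (z δ)) := by
    intro δ
    rw [hyz δ]
    simp only [Matrix.mulVec_add, Matrix.mulVec_smul, dotProduct_add,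
      add_dotProduct, smul_dotProduct, dotProduct_smul, smul_eq_mul]
    rw [hQρρ, hQzρ (z δ), hQρz (z δ)]
    ring
  -- value at 0
  have hq0 : z 0 ⬝ᵥ R⁻¹.mulVec (z 0)
      = (1 - Real.exp (-(θ * t)))^2 * ∑ k, ρ k * α k ^ 2 := by
    rw [hz0, hQdiag]
    have hterm : ∀ k : Fin K,
        ((Real.exp r - 1) • u) k * ((ρ k)⁻¹ * (((Real.exp r - 1) • u) k))
          = (1 - Real.exp (-(θ * t)))^2 * (ρ k * α k ^ 2) := by
      intro k
      simp only [Pi.smul_apply, smul_eq_mul, hu, hr]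
      have hk := (hρ k).ne'
      field_simp
      ring
    rw [Finset.sum_congr rfl fun k _ => hterm k, ← Finset.mul_sum]
  -- norm constants
  have hC1 : (1:ℝ) ≤ max 1 (‖B 0‖ + ‖S‖) := le_max_left _ _
  set C := max 1 (‖B 0‖ + ‖S‖) with hCdef
  have hB0C : ‖B 0‖ ≤ C := by
    have := norm_nonneg S
    have h := le_max_right 1 (‖B 0‖ + ‖S‖)
    rw [← hCdef] at h
    linarith
  have hBC : ∀ δ : ℝ, |δ| ≤ 1 → ‖B δ‖ ≤ C := by
    intro δ hδ
    rw [hBaffine δ]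
    have h := le_max_right 1 (‖B 0‖ + ‖S‖)
    rw [← hCdef] at h
    calc ‖B 0 + δ • S‖ ≤ ‖B 0‖ + ‖δ • S‖ := norm_add_le _ _
      _ = ‖B 0‖ + |δ| * ‖S‖ := by rw [norm_smul, Real.norm_eq_abs]
      _ ≤ ‖B 0‖ + 1 * ‖S‖ :=
          add_le_add_right (mul_le_mul_of_nonneg_right hδ (norm_nonneg S)) _
      _ ≤ C := by rw [one_mul]; exact h
  set D := ∑' n : ℕ, C ^ n / Nat.factorial n with hDdef
  set c1 := D * ‖S‖ * ‖r • u‖ with hc1def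
  have hDnn : 0 ≤ D := by
    rw [hDdef]
    refine tsum_nonneg fun n => ?_
    have h0C : (0:ℝ) ≤ C := le_trans zero_le_one hC1
    positivity
  have hc1nn : 0 ≤ c1 := by
    rw [hc1def]
    positivity
  have hzlip : ∀ δ : ℝ, |δ| ≤ 1 → ‖z δ - z 0‖ ≤ c1 * |δ| := by
    intro δ hδ
    have hGlip : ‖G δ - G 0‖ ≤ (D * ‖S‖) * |δ| := by
      have hbd := hG_lip (B δ) (B 0) (hBC δ hδ) hB0C hC1
      have hBdiff : ‖B δ - B 0‖ = |δ| * ‖S‖ := by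
        rw [hBaffine δ, add_sub_cancel_left, norm_smul, Real.norm_eq_abs]
      rw [hBdiff] at hbd
      rw [hGdef]
      simp only []
      calc ‖(∑' n : ℕ, ((Nat.factorial (n+1) : ℝ))⁻¹ • B δ ^ n)
            - ∑' n : ℕ, ((Nat.factorial (n+1) : ℝ))⁻¹ • B 0 ^ n‖
          ≤ D * (|δ| * ‖S‖) := hbd
        _ = (D * ‖S‖) * |δ| := by ring
    rw [hzdef]
    simp only []
    rw [← Matrix.sub_mulVec]
    calc ‖(G δ - G 0).mulVec (r • u)‖ ≤ ‖G δ - G 0‖ * ‖r • u‖ :=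
          Matrix.linfty_opNorm_mulVec _ _
      _ ≤ ((D * ‖S‖) * |δ|) * ‖r • u‖ :=
          mul_le_mul_of_nonneg_right hGlip (norm_nonneg _)
      _ = c1 * |δ| := by rw [hc1def]; ring
  have hznorm : ∀ δ : ℝ, |δ| ≤ 1 → ‖z δ‖ ≤ ‖z 0‖ + c1 := by
    intro δ hδ
    have h1 : ‖z δ‖ ≤ ‖z 0‖ + ‖z δ - z 0‖ := by
      have h := norm_add_le (z 0) (z δ - z 0)
      rwa [add_sub_cancel] at h
    have h2 := hzlip δ hδ
    have h3 : c1 * |δ| ≤ c1 := by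
      calc c1 * |δ| ≤ c1 * 1 := mul_le_mul_of_nonneg_left hδ hc1nn
        _ = c1 := mul_one c1
    linarith
  -- final bound
  set cR := ∑ k : Fin K, (ρ k)⁻¹ with hcRdef
  have hcRnn : (0:ℝ) ≤ cR := by
    rw [hcRdef]
    exact Finset.sum_nonneg fun k _ => inv_nonneg.mpr (hρ k).le
  set cc := cR * c1 * (2 * ‖z 0‖ + c1) with hccdef
  have hccnn : 0 ≤ cc := by
    rw [hccdef]
    positivity
  rw [Asymptotics.isBigO_iff]
  refine ⟨cc, ?_⟩
  have hball : ∀ᶠ δ : ℝ in nhds 0, |δ| ≤ 1 := by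
    have := Metric.ball_mem_nhds (0:ℝ) one_pos
    refine Filter.eventually_of_mem this fun δ hδ => ?_
    rw [Metric.mem_ball, Real.dist_eq, sub_zero] at hδ
    exact hδ.le
  filter_upwards [hball] with δ hδ
  rw [hquad δ, hfexp δ]
  rcases eq_or_ne δ 0 with hδ0 | hδ0
  · subst hδ0
    have h0 : (1 + (0:ℝ) * (∑ k, z 0 k) + 0 * (∑ k, z 0 k)
          + (0:ℝ)^2 * (z 0 ⬝ᵥ R⁻¹.mulVec (z 0)))
        - (1 + (0:ℝ) ^ 2 * (1 - Real.exp (-(θ * t))) ^ 2 * ∑ k, ρ k * α k ^ 2) = 0 := by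
      ring
    rw [h0]
    simp
  · rw [hzsum δ hδ0]
    have hqdiff : z δ ⬝ᵥ R⁻¹.mulVec (z δ) - z 0 ⬝ᵥ R⁻¹.mulVec (z 0)
        = (z δ - z 0) ⬝ᵥ R⁻¹.mulVec (z δ) + z 0 ⬝ᵥ R⁻¹.mulVec (z δ - z 0) := by
      simp only [sub_dotProduct, Matrix.mulVec_sub, dotProduct_sub]
      ring
    have hqbound : |z δ ⬝ᵥ R⁻¹.mulVec (z δ) - z 0 ⬝ᵥ R⁻¹.mulVec (z 0)| ≤ cc * |δ| := by
      rw [hqdiff]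
      have e1 : |(z δ - z 0) ⬝ᵥ R⁻¹.mulVec (z δ)| ≤ cR * (c1 * |δ|) * (‖z 0‖ + c1) := by
        refine (hQbound _ _).trans ?_
        have h1 := hzlip δ hδ
        have h2 := hznorm δ hδ
        calc cR * ‖z δ - z 0‖ * ‖z δ‖ = cR * (‖z δ - z 0‖ * ‖z δ‖) := by ring
          _ ≤ cR * ((c1 * |δ|) * (‖z 0‖ + c1)) :=
              mul_le_mul_of_nonneg_left
                (mul_le_mul h1 h2 (norm_nonneg _) (by positivity)) hcRnn
          _ = cR * (c1 * |δ|) * (‖z 0‖ + c1) := by ring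
      have e2 : |z 0 ⬝ᵥ R⁻¹.mulVec (z δ - z 0)| ≤ cR * ‖z 0‖ * (c1 * |δ|) := by
        refine (hQbound _ _).trans ?_
        have h1 := hzlip δ hδ
        exact mul_le_mul_of_nonneg_left h1 (by positivity)
      calc |(z δ - z 0) ⬝ᵥ R⁻¹.mulVec (z δ) + z 0 ⬝ᵥ R⁻¹.mulVec (z δ - z 0)|
          ≤ |(z δ - z 0) ⬝ᵥ R⁻¹.mulVec (z δ)| + |z 0 ⬝ᵥ R⁻¹.mulVec (z δ - z 0)| :=
            abs_add_le _ _
        _ ≤ cR * (c1 * |δ|) * (‖z 0‖ + c1) + cR * ‖z 0‖ * (c1 * |δ|) := add_le_add e1 e2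
        _ = cc * |δ| := by rw [hccdef]; ring
    have goal1 : (1 + δ * 0 + δ * 0 + δ^2 * (z δ ⬝ᵥ R⁻¹.mulVec (z δ)))
        - (1 + δ ^ 2 * (1 - Real.exp (-(θ * t))) ^ 2 * ∑ k, ρ k * α k ^ 2)
        = δ^2 * (z δ ⬝ᵥ R⁻¹.mulVec (z δ) - z 0 ⬝ᵥ R⁻¹.mulVec (z 0)) := by
      rw [hq0]
      ring
    rw [Real.norm_eq_abs, Real.norm_eq_abs, goal1, abs_mul, abs_pow, abs_pow]
    calc |δ|^2 * |z δ ⬝ᵥ R⁻¹.mulVec (z δ) - z 0 ⬝ᵥ R⁻¹.mulVec (z 0)|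
        ≤ |δ|^2 * (cc * |δ|) := mul_le_mul_of_nonneg_left hqbound (by positivity)
      _ = cc * |δ|^3 := by ring
end

section
/- Let K ≥ 1, ρ_1,…,ρ_K > 0 with ∑ρ_k = 1, α_1,…,α_K ∈ ℝ with ∑ρ_kα_k = 0, θ̄ > 0, and T > 0. For δ ∈ ℝ let M_δ be the K×K matrix with entries (M_δ)_{ij} = −θ̄(1 + δα_i)(δ_{ij} − ρ_j), let ϱ = (ρ_1,…,ρ_K) and R = diag(ρ_1,…,ρ_K). Then, as δ → 0, ∫₀ᵀ ϱᵀ·exp(s·M_δ)·R^{−1}·exp(s·M_δ)ᵀ·ϱ ds = T + δ²·(∑_{k=1}^K ρ_k α_k²)·( ∫₀ᵀ (1 − e^{−θ̄s})² ds ) + O(δ³). Equivalently, the variance σ_T² = (σ²/N)∫₀ᵀ ϱᵀe^{M_δ s}R^{−1}(e^{M_δ s})ᵀϱ ds satisfies σ_T² = (σ²T/N)·[ 1 + δ²(∑ρ_kα_k²)·( (1/T)∫₀ᵀ(1 − e^{−θ̄s})² ds ) + O(δ³) ] for any fixed σ > 0 and N ≥ 1. -/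
open Matrix Filter Asymptotics intervalIntegral
open scoped Nat

namespace Stmt18Aux

/-- The drift matrix. -/
def Mof (K : ℕ) (ρ α : Fin K → ℝ) (θ δ : ℝ) : Matrix (Fin K) (Fin K) ℝ :=
  Matrix.of fun i j => -θ * (1 + δ * α i) * ((if i = j then (1:ℝ) else 0) - ρ j)

section

variable {K : ℕ} {ρ α : Fin K → ℝ} {θ : ℝ}

theorem vecMul_Mof (δ : ℝ) (v : Fin K → ℝ) (j : Fin K) :
    (v ᵥ* Mof K ρ α θ δ) j
      = -θ * ((1 + δ * α j) * v j - ρ j * (∑ i, (1 + δ * α i) * v i)) := by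
  simp only [Mof, Matrix.vecMul, dotProduct, Matrix.of_apply]
  have h : ∀ i : Fin K, v i * (-θ * (1 + δ * α i) * ((if i = j then (1:ℝ) else 0) - ρ j))
      = (if i = j then (-θ * ((1 + δ * α i) * v i)) else 0)
        + θ * ρ j * ((1 + δ * α i) * v i) := by
    intro i; split_ifs <;> ring
  rw [Finset.sum_congr rfl fun i _ => h i, Finset.sum_add_distrib,
    Finset.sum_ite_eq' Finset.univ j]
  simp only [Finset.mem_univ, if_true]
  rw [← Finset.mul_sum]
  ring

theorem rho_vecMul_Mof (hsum : ∑ k, ρ k = 1) (hcen : ∑ k, ρ k * α k = 0) (δ : ℝ) :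
    ρ ᵥ* Mof K ρ α θ δ = (δ * -θ) • (fun i => ρ i * α i) := by
  funext j
  rw [vecMul_Mof]
  have h1 : ∑ i, (1 + δ * α i) * ρ i = 1 := by
    have h : ∀ i : Fin K, (1 + δ * α i) * ρ i = ρ i + δ * (ρ i * α i) := fun i => by ring
    rw [Finset.sum_congr rfl fun i _ => h i, Finset.sum_add_distrib, hsum, ← Finset.mul_sum,
      hcen]
    ring
  rw [h1]
  simp only [Pi.smul_apply, smul_eq_mul]
  ring

theorem beta_vecMul_Mof (hcen : ∑ k, ρ k * α k = 0) (δ : ℝ) :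
    (fun i => ρ i * α i) ᵥ* Mof K ρ α θ δ
      = (-θ) • (fun i => ρ i * α i)
        + δ • (fun j => -θ * (α j * (ρ j * α j) - (∑ k, ρ k * α k ^ 2) * ρ j)) := by
  funext j
  rw [vecMul_Mof]
  have h1 : ∑ i, (1 + δ * α i) * (ρ i * α i) = δ * ∑ k, ρ k * α k ^ 2 := by
    have h : ∀ i : Fin K, (1 + δ * α i) * (ρ i * α i)
        = ρ i * α i + δ * (ρ i * α i ^ 2) := fun i => by ring
    rw [Finset.sum_congr rfl fun i _ => h i, Finset.sum_add_distrib, hcen, ← Finset.mul_sum]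
    ring
  rw [h1]
  simp only [Pi.add_apply, Pi.smul_apply, smul_eq_mul]
  ring

theorem colsum_vecMul_Mof (hsum : ∑ k, ρ k = 1) (δ : ℝ) (v : Fin K → ℝ) :
    ∑ j, (v ᵥ* Mof K ρ α θ δ) j = 0 := by
  have h : ∀ j : Fin K, (v ᵥ* Mof K ρ α θ δ) j
      = -θ * ((1 + δ * α j) * v j) + θ * (∑ i, (1 + δ * α i) * v i) * ρ j := by
    intro j; rw [vecMul_Mof]; ring
  rw [Finset.sum_congr rfl fun j _ => h j, Finset.sum_add_distrib]
  have e1 : ∑ x, -θ * ((1 + δ * α x) * v x) = -θ * ∑ i, (1 + δ * α i) * v i := by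
    rw [Finset.mul_sum]
  have e2 : ∑ x, (θ * ∑ i, (1 + δ * α i) * v i) * ρ x
      = (θ * ∑ i, (1 + δ * α i) * v i) * 1 := by
    rw [← Finset.mul_sum, hsum]
  rw [e1, e2]
  ring

theorem opBound_vecMul_Mof (hρ : ∀ k, 0 < ρ k) (hsum : ∑ k, ρ k = 1) (hθ : 0 < θ)
    (δ : ℝ) (hδ : |δ| ≤ 1) (v : Fin K → ℝ) :
    ‖v ᵥ* Mof K ρ α θ δ‖ ≤ (2 * θ * (∑ i, (1 + |α i|))) * ‖v‖ := by
  set Ca := ∑ i, (1 + |α i|) with hCa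
  have hCa0 : 0 ≤ Ca := Finset.sum_nonneg fun i _ => by positivity
  have habs : ∀ i : Fin K, |1 + δ * α i| ≤ 1 + |α i| := by
    intro i
    calc |1 + δ * α i| ≤ |(1:ℝ)| + |δ * α i| := abs_add_le _ _
      _ = 1 + |δ| * |α i| := by rw [abs_one, abs_mul]
      _ ≤ 1 + 1 * |α i| := by
          have := abs_nonneg (α i)
          nlinarith
      _ = 1 + |α i| := by ring
  have hCabound : ∀ i : Fin K, 1 + |α i| ≤ Ca := by
    intro i
    exact Finset.single_le_sum (f := fun i => 1 + |α i|) (fun i _ => by positivity)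
      (Finset.mem_univ i)
  have hv : ∀ i : Fin K, |v i| ≤ ‖v‖ := by
    intro i
    simpa [Real.norm_eq_abs] using norm_le_pi_norm v i
  have hρ1 : ∀ j, ρ j ≤ 1 := by
    intro j
    calc ρ j ≤ ∑ k, ρ k :=
          Finset.single_le_sum (fun k _ => (hρ k).le) (Finset.mem_univ j)
      _ = 1 := hsum
  have hS : |∑ i, (1 + δ * α i) * v i| ≤ Ca * ‖v‖ := by
    calc |∑ i, (1 + δ * α i) * v i| ≤ ∑ i, |(1 + δ * α i) * v i| :=
          Finset.abs_sum_le_sum_abs _ _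
      _ ≤ ∑ i, (1 + |α i|) * ‖v‖ := by
          refine Finset.sum_le_sum fun i _ => ?_
          rw [abs_mul]
          have h1 := habs i
          have h2 := hv i
          have h3 := abs_nonneg ((1:ℝ) + δ * α i)
          have h4 := abs_nonneg (v i)
          nlinarith [norm_nonneg v]
      _ = Ca * ‖v‖ := by rw [← Finset.sum_mul]
  rw [pi_norm_le_iff_of_nonneg (by positivity)]
  intro j
  rw [vecMul_Mof]
  rw [Real.norm_eq_abs, abs_mul, abs_neg, abs_of_pos hθ]
  have h1 : |(1 + δ * α j) * v j - ρ j * (∑ i, (1 + δ * α i) * v i)|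
      ≤ |(1 + δ * α j) * v j| + |ρ j * (∑ i, (1 + δ * α i) * v i)| := abs_sub _ _
  have h2 : |(1 + δ * α j) * v j| ≤ Ca * ‖v‖ := by
    rw [abs_mul]
    have := habs j; have := hv j; have := hCabound j
    have h3 := abs_nonneg ((1:ℝ) + δ * α j); have h4 := abs_nonneg (v j)
    nlinarith [norm_nonneg v]
  have h3 : |ρ j * (∑ i, (1 + δ * α i) * v i)| ≤ Ca * ‖v‖ := by
    rw [abs_mul, abs_of_pos (hρ j)]
    have := hρ1 j
    have h5 := abs_nonneg (∑ i, (1 + δ * α i) * v i)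
    nlinarith [hρ j, hS]
  nlinarith [hθ]

theorem tsum_succ_exp (x : ℝ) :
    ∑' n : ℕ, x ^ (n + 1) * (((n + 1)! : ℝ))⁻¹ = Real.exp x - 1 := by
  have hs : Summable (fun n : ℕ => x ^ n / (n ! : ℝ)) := Real.summable_pow_div_factorial x
  have hexp : Real.exp x = ∑' n : ℕ, x ^ n / (n ! : ℝ) := by
    rw [Real.exp_eq_exp_ℝ, NormedSpace.exp_eq_tsum_div]
  rw [hs.tsum_eq_zero_add] at hexp
  simp only [pow_zero, Nat.factorial_zero, Nat.cast_one, div_one] at hexp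
  have : ∑' n : ℕ, x ^ (n + 1) * (((n + 1)! : ℝ))⁻¹
      = ∑' n : ℕ, x ^ (n + 1) / (((n + 1)! : ℝ)) :=
    tsum_congr fun n => by rw [div_eq_mul_inv]
  rw [this]
  linarith

end

theorem decomp {K : ℕ} (ρ α : Fin K → ℝ) (hρ : ∀ k, 0 < ρ k) (hsum : ∑ k, ρ k = 1)
    (hcen : ∑ k, ρ k * α k = 0) (θ : ℝ) (hθ : 0 < θ) (T : ℝ) (hT : 0 < T) :
    ∃ Cψ : ℝ, 0 ≤ Cψ ∧ ∀ δ : ℝ, |δ| ≤ 1 → ∀ s : ℝ, 0 ≤ s → s ≤ T →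
      ∃ ψ : Fin K → ℝ,
        (ρ ᵥ* NormedSpace.exp (s • Mof K ρ α θ δ)
          = fun k => ρ k + (δ * (Real.exp (-(θ * s)) - 1)) * (ρ k * α k) + ψ k)
        ∧ (∀ k, |ψ k| ≤ Cψ * δ ^ 2) ∧ (∑ k, ψ k = 0) := by
  letI : SeminormedRing (Matrix (Fin K) (Fin K) ℝ) := Matrix.linftyOpSemiNormedRing
  letI : NormedRing (Matrix (Fin K) (Fin K) ℝ) := Matrix.linftyOpNormedRing
  letI : NormedAlgebra ℝ (Matrix (Fin K) (Fin K) ℝ) := Matrix.linftyOpNormedAlgebra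
  set β : Fin K → ℝ := fun i => ρ i * α i with hβ
  set A : ℝ := ∑ k, ρ k * α k ^ 2 with hA
  set γ : Fin K → ℝ := fun j => -θ * (α j * β j - A * ρ j) with hγ
  set Ca : ℝ := ∑ i, (1 + |α i|) with hCa
  have hCa0 : 0 ≤ Ca := Finset.sum_nonneg fun i _ => by positivity
  set c : ℝ := 1 + θ + 2 * θ * Ca with hc
  have hc1 : 1 ≤ c := by rw [hc]; nlinarith
  have hcθ : θ ≤ c := by rw [hc]; nlinarith
  have hcM : 2 * θ * Ca ≤ c := by rw [hc]; nlinarith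
  have hc0 : 0 < c := by linarith
  have hcT0 : 0 ≤ c * T := by positivity
  clear_value Ca c
  refine ⟨‖γ‖ * ((c * T) * Real.exp (c * T)), by positivity, ?_⟩
  intro δ hδ s hs0 hsT
  set Md : Matrix (Fin K) (Fin K) ℝ := Mof K ρ α θ δ with hMd
  set x : ℕ → Fin K → ℝ := fun n => ρ ᵥ* Md ^ n with hx
  set r : ℕ → Fin K → ℝ := fun n => x (n + 1) - (δ * (-θ) ^ (n + 1)) • β with hrdef
  have hxsucc : ∀ n, x (n + 1) = x n ᵥ* Md := by
    intro n
    rw [hx]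
    simp only
    rw [pow_succ, ← Matrix.vecMul_vecMul]
  have hx0 : x 0 = ρ := by
    rw [hx]; simp only [pow_zero, Matrix.vecMul_one]
  have hx1split : ∀ n, x (n + 1) = (δ * (-θ) ^ (n + 1)) • β + r n := by
    intro n
    rw [hrdef]
    simp only
    abel
  have hr0 : r 0 = 0 := by
    rw [hrdef]
    simp only
    rw [hxsucc 0, hx0, hMd, rho_vecMul_Mof hsum hcen]
    funext j
    simp [pow_one, hβ]
  have hrsucc : ∀ n, r (n + 1) = (δ ^ 2 * (-θ) ^ (n + 1)) • γ + (r n ᵥ* Md) := by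
    intro n
    have h2 : x (n + 2) = (δ * (-θ) ^ (n + 1)) • (β ᵥ* Md) + (r n ᵥ* Md) := by
      rw [hxsucc (n + 1), hx1split n, Matrix.add_vecMul, Matrix.smul_vecMul]
    have h3 : β ᵥ* Md = (-θ) • β + δ • γ := by
      rw [hMd]; exact beta_vecMul_Mof hcen δ
    rw [hrdef]
    simp only
    rw [h2, h3]
    funext j
    simp only [Pi.add_apply, Pi.sub_apply, Pi.smul_apply, smul_eq_mul]
    rw [pow_succ (-θ) (n + 1)]
    ring
  have hopb : ∀ v : Fin K → ℝ, ‖v ᵥ* Md‖ ≤ (2 * θ * Ca) * ‖v‖ := by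
    intro v
    rw [hMd, hCa]
    exact opBound_vecMul_Mof hρ hsum hθ δ hδ v
  have hrb : ∀ n, ‖r n‖ ≤ δ ^ 2 * ‖γ‖ * (n + 1 : ℝ) * c ^ (n + 1) := by
    intro n
    induction n with
    | zero =>
      rw [hr0, norm_zero]
      positivity
    | succ n ih =>
      rw [hrsucc n]
      have h1 : ‖(δ ^ 2 * (-θ) ^ (n + 1)) • γ‖ = δ ^ 2 * θ ^ (n + 1) * ‖γ‖ := by
        rw [norm_smul, Real.norm_eq_abs, abs_mul, abs_of_nonneg (sq_nonneg δ), abs_pow,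
          abs_neg, abs_of_pos hθ]
      have h2 : ‖r n ᵥ* Md‖ ≤ (2 * θ * Ca) * ‖r n‖ := hopb (r n)
      have h3 : θ ^ (n + 1) ≤ c ^ (n + 1) := pow_le_pow_left₀ hθ.le hcθ (n + 1)
      have h4 : c ^ (n + 1) ≤ c ^ (n + 2) := by
        apply pow_le_pow_right₀ (by linarith) (by omega)
      have h5 : (0:ℝ) ≤ c ^ (n + 1) := by positivity
      have h6 : (0:ℝ) ≤ ‖γ‖ := norm_nonneg _
      have h7 : (0:ℝ) ≤ ‖r n‖ := norm_nonneg _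
      calc ‖(δ ^ 2 * (-θ) ^ (n + 1)) • γ + r n ᵥ* Md‖
          ≤ ‖(δ ^ 2 * (-θ) ^ (n + 1)) • γ‖ + ‖r n ᵥ* Md‖ := norm_add_le _ _
        _ ≤ δ ^ 2 * θ ^ (n + 1) * ‖γ‖ + (2 * θ * Ca) * ‖r n‖ := by
            rw [h1]
            linarith
        _ ≤ δ ^ 2 * ‖γ‖ * ((n : ℝ) + 1 + 1) * c ^ (n + 2) := by
            have h8 : (2 * θ * Ca) * ‖r n‖ ≤ c * (δ ^ 2 * ‖γ‖ * (n + 1 : ℝ) * c ^ (n + 1)) :=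
              le_trans (mul_le_mul_of_nonneg_right hcM h7)
                (mul_le_mul_of_nonneg_left ih hc0.le)
            have h10 : c * (δ ^ 2 * ‖γ‖ * (n + 1 : ℝ) * c ^ (n + 1))
                = δ ^ 2 * ‖γ‖ * (n + 1 : ℝ) * c ^ (n + 2) := by
              rw [pow_succ c (n + 1)]; ring
            have h12 : θ ^ (n + 1) ≤ c ^ (n + 2) := le_trans h3 h4
            have h11 : δ ^ 2 * θ ^ (n + 1) * ‖γ‖ ≤ δ ^ 2 * ‖γ‖ * c ^ (n + 2) := by
              calc δ ^ 2 * θ ^ (n + 1) * ‖γ‖ ≤ δ ^ 2 * c ^ (n + 2) * ‖γ‖ :=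
                    mul_le_mul_of_nonneg_right
                      (mul_le_mul_of_nonneg_left h12 (sq_nonneg δ)) h6
                _ = δ ^ 2 * ‖γ‖ * c ^ (n + 2) := by ring
            have h13 : δ ^ 2 * ‖γ‖ * ((n : ℝ) + 1 + 1) * c ^ (n + 2)
                = δ ^ 2 * ‖γ‖ * c ^ (n + 2) + δ ^ 2 * ‖γ‖ * ((n : ℝ) + 1) * c ^ (n + 2) := by
              ring
            linarith
        _ = δ ^ 2 * ‖γ‖ * ((n + 1 : ℕ) + 1 : ℝ) * c ^ (n + 1 + 1) := by
            push_cast; ring_nf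
  have hrsum0 : ∀ n, ∑ j, r n j = 0 := by
    intro n
    rw [hrdef]
    simp only [Pi.sub_apply, Pi.smul_apply, smul_eq_mul]
    rw [Finset.sum_sub_distrib, hxsucc n, hMd, colsum_vecMul_Mof hsum, ← Finset.mul_sum]
    have hβ0 : ∑ j, β j = 0 := hcen
    rw [hβ0]
    ring
  -- the continuous linear map X ↦ ρ ᵥ* X
  obtain ⟨L, hLdef⟩ : ∃ L : Matrix (Fin K) (Fin K) ℝ →L[ℝ] (Fin K → ℝ),
      ∀ X, L X = ρ ᵥ* X := by
    refine ⟨LinearMap.toContinuousLinearMap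
      { toFun := fun X => ρ ᵥ* X
        map_add' := fun X Y => Matrix.vecMul_add X Y ρ
        map_smul' := fun c X => by
          ext j
          simp [Matrix.vecMul, dotProduct, Finset.mul_sum, mul_assoc,
            mul_left_comm] }, fun X => rfl⟩
  have hterm : ∀ n : ℕ, L (((n ! : ℝ))⁻¹ • (s • Md) ^ n) = (((n ! : ℝ))⁻¹ * s ^ n) • x n := by
    intro n
    rw [_root_.map_smul, hLdef, smul_pow]
    ext j
    rw [hx]
    simp [Matrix.vecMul, dotProduct, Finset.mul_sum, mul_assoc, mul_left_comm]
  have hu : ρ ᵥ* NormedSpace.exp (s • Md) = ∑' n : ℕ, (((n ! : ℝ))⁻¹ * s ^ n) • x n := by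
    rw [NormedSpace.exp_eq_tsum ℝ, ← hLdef,
      L.map_tsum (NormedSpace.expSeries_summable' (𝕂 := ℝ) (s • Md))]
    exact tsum_congr hterm
  have husum : Summable (fun n : ℕ => (((n ! : ℝ))⁻¹ * s ^ n) • x n) := by
    have h := ((NormedSpace.expSeries_summable' (𝕂 := ℝ) (s • Md)).map
      L.toLinearMap.toAddMonoidHom L.continuous)
    exact h.congr hterm
  set aβ : ℕ → ℝ := fun n => δ * ((-(θ * s)) ^ (n + 1) * (((n + 1)! : ℝ))⁻¹) with haβ
  set ar : ℕ → ℝ := fun n => (((n + 1)! : ℝ))⁻¹ * s ^ (n + 1) with har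
  have hsplitn : ∀ n : ℕ,
      ((((n + 1)! : ℝ))⁻¹ * s ^ (n + 1)) • x (n + 1) = aβ n • β + ar n • r n := by
    intro n
    rw [hx1split n, smul_add]
    congr 1
    rw [smul_smul]
    congr 1
    rw [haβ]
    simp only
    rw [show (-(θ * s)) = (-θ) * s from by ring, mul_pow]
    ring
  have hscal : Summable (fun n : ℕ => (-(θ * s)) ^ (n + 1) * (((n + 1)! : ℝ))⁻¹) := by
    have h0 := Real.summable_pow_div_factorial (-(θ * s))
    have h1 := (summable_nat_add_iff 1).mpr h0
    exact h1.congr fun n => by rw [div_eq_mul_inv]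
  have hsum_aβ : Summable (fun n : ℕ => aβ n • β) := (hscal.mul_left δ).smul_const β
  have hfaccast : ∀ n : ℕ, (((n + 1)! : ℝ)) = ((n : ℝ) + 1) * (n ! : ℝ) := by
    intro n
    rw [Nat.factorial_succ]
    push_cast
    ring
  have hfacpos : ∀ n : ℕ, (0 : ℝ) < (n ! : ℝ) := fun n => by
    exact_mod_cast Nat.factorial_pos n
  have hrbound : ∀ n : ℕ, ‖ar n • r n‖
      ≤ (δ ^ 2 * ‖γ‖ * (c * T)) * ((c * T) ^ n / (n ! : ℝ)) := by
    intro n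
    rw [norm_smul, Real.norm_eq_abs]
    have h1 : |ar n| ≤ (((n + 1)! : ℝ))⁻¹ * T ^ (n + 1) := by
      rw [har]
      simp only
      rw [abs_mul, abs_inv, abs_pow, abs_of_nonneg hs0,
        abs_of_nonneg (le_of_lt (by exact_mod_cast Nat.factorial_pos (n + 1) : (0:ℝ) < ((n + 1)! : ℝ)))]
      have : s ^ (n + 1) ≤ T ^ (n + 1) := pow_le_pow_left₀ hs0 hsT (n + 1)
      have hipos : (0:ℝ) < (((n + 1)! : ℝ))⁻¹ := by
        apply inv_pos.mpr
        exact_mod_cast Nat.factorial_pos (n + 1)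
      nlinarith
    have h2 := hrb n
    have h3 : (0:ℝ) ≤ |ar n| := abs_nonneg _
    have h4 : (0:ℝ) ≤ ‖r n‖ := norm_nonneg _
    calc |ar n| * ‖r n‖
        ≤ ((((n + 1)! : ℝ))⁻¹ * T ^ (n + 1)) * (δ ^ 2 * ‖γ‖ * (n + 1 : ℝ) * c ^ (n + 1)) := by
          apply mul_le_mul h1 h2 h4
          positivity
      _ = (δ ^ 2 * ‖γ‖ * (c * T)) * ((c * T) ^ n / (n ! : ℝ)) := by
          rw [hfaccast n]
          have hn1 : ((n : ℝ) + 1) ≠ 0 := by positivity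
          have hnf : (n ! : ℝ) ≠ 0 := (hfacpos n).ne'
          field_simp
          ring
  have hg_sum : Summable (fun n : ℕ => (δ ^ 2 * ‖γ‖ * (c * T)) * ((c * T) ^ n / (n ! : ℝ))) :=
    (Real.summable_pow_div_factorial (c * T)).mul_left _
  have hsum_ar : Summable (fun n : ℕ => ar n • r n) :=
    Summable.of_norm_bounded hg_sum hrbound
  set ψ : Fin K → ℝ := ∑' n : ℕ, ar n • r n with hψdef
  have htsum_aβ : ∑' n : ℕ, aβ n • β = (δ * (Real.exp (-(θ * s)) - 1)) • β := by
    rw [Summable.tsum_smul_const (hscal.mul_left δ)]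
    congr 1
    rw [tsum_mul_left, tsum_succ_exp]
  have hufull : ρ ᵥ* NormedSpace.exp (s • Md)
      = ρ + ((δ * (Real.exp (-(θ * s)) - 1)) • β + ψ) := by
    rw [hu, husum.tsum_eq_zero_add]
    congr 1
    · simp [hx0]
    · rw [← htsum_aβ, hψdef, ← Summable.tsum_add hsum_aβ hsum_ar]
      exact tsum_congr hsplitn
  have hψle : ∀ k, |ψ k| ≤ (‖γ‖ * ((c * T) * Real.exp (c * T))) * δ ^ 2 := by
    have hnorm : ‖ψ‖ ≤ (‖γ‖ * ((c * T) * Real.exp (c * T))) * δ ^ 2 := by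
      have h1 : Summable (fun n : ℕ => ‖ar n • r n‖) :=
        Summable.of_nonneg_of_le (fun n => norm_nonneg _) hrbound hg_sum
      calc ‖ψ‖ ≤ ∑' n : ℕ, ‖ar n • r n‖ := norm_tsum_le_tsum_norm h1
        _ ≤ ∑' n : ℕ, (δ ^ 2 * ‖γ‖ * (c * T)) * ((c * T) ^ n / (n ! : ℝ)) :=
            Summable.tsum_le_tsum hrbound h1 hg_sum
        _ = (δ ^ 2 * ‖γ‖ * (c * T)) * Real.exp (c * T) := by
            rw [tsum_mul_left]
            congr 1
            rw [Real.exp_eq_exp_ℝ, NormedSpace.exp_eq_tsum_div]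
        _ = (‖γ‖ * ((c * T) * Real.exp (c * T))) * δ ^ 2 := by ring
    intro k
    calc |ψ k| ≤ ‖ψ‖ := by
          simpa [Real.norm_eq_abs] using norm_le_pi_norm ψ k
      _ ≤ _ := hnorm
  have hψ0 : ∑ k, ψ k = 0 := by
    obtain ⟨S, hSdef⟩ : ∃ S : (Fin K → ℝ) →L[ℝ] ℝ, ∀ v, S v = ∑ j, v j := by
      refine ⟨LinearMap.toContinuousLinearMap
        { toFun := fun v : Fin K → ℝ => ∑ j, v j
          map_add' := fun v w => by simp [Finset.sum_add_distrib]
          map_smul' := fun c v => by simp [Finset.mul_sum] }, fun v => rfl⟩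
    have h1 : ∑ k, ψ k = S ψ := (hSdef ψ).symm
    rw [h1, hψdef, S.map_tsum hsum_ar]
    have h2 : ∀ n : ℕ, S (ar n • r n) = 0 := by
      intro n
      rw [_root_.map_smul, hSdef, hrsum0 n, smul_zero]
    rw [tsum_congr h2, tsum_zero]
  refine ⟨ψ, ?_, hψle, hψ0⟩
  rw [hufull]
  funext k
  simp only [Pi.add_apply, Pi.smul_apply, smul_eq_mul, hβ]
  ring


theorem diag_quad_form {K : ℕ} (ρ dg : Fin K → ℝ) (E : Matrix (Fin K) (Fin K) ℝ) :
    ρ ⬝ᵥ (E * Matrix.diagonal dg * Eᵀ).mulVec ρ = ∑ k, dg k * (ρ ᵥ* E) k ^ 2 := by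
  rw [Matrix.dotProduct_mulVec, ← Matrix.vecMul_vecMul, ← Matrix.vecMul_vecMul,
    Matrix.vecMul_transpose, dotProduct_comm, Matrix.dotProduct_mulVec]
  simp only [dotProduct, Matrix.vecMul_diagonal]
  exact Finset.sum_congr rfl fun k _ => by ring

theorem inv_diag {K : ℕ} (ρ : Fin K → ℝ) (hρ : ∀ k, 0 < ρ k) :
    (Matrix.diagonal ρ)⁻¹ = Matrix.diagonal (fun i => (ρ i)⁻¹) := by
  refine Matrix.inv_eq_right_inv ?_
  rw [Matrix.diagonal_mul_diagonal]
  have h : (fun i => ρ i * (ρ i)⁻¹) = fun _ => (1:ℝ) := by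
    funext i; exact mul_inv_cancel₀ (hρ i).ne'
  rw [h, Matrix.diagonal_one]

theorem key {K : ℕ} (ρ α : Fin K → ℝ) (hρ : ∀ k, 0 < ρ k) (hsum : ∑ k, ρ k = 1)
    (hcen : ∑ k, ρ k * α k = 0) (θ : ℝ) (hθ : 0 < θ) (T : ℝ) (hT : 0 < T) :
    ∃ C : ℝ, 0 ≤ C ∧ ∀ δ : ℝ, |δ| ≤ 1 → ∀ s : ℝ, 0 ≤ s → s ≤ T →
      |ρ ⬝ᵥ (NormedSpace.exp (s • Mof K ρ α θ δ) * (Matrix.diagonal ρ)⁻¹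
          * (NormedSpace.exp (s • Mof K ρ α θ δ))ᵀ).mulVec ρ
        - (1 + δ ^ 2 * (∑ k, ρ k * α k ^ 2) * (1 - Real.exp (-(θ * s))) ^ 2)|
        ≤ C * |δ| ^ 3 := by
  obtain ⟨Cψ, hCψ0, hdec⟩ := decomp ρ α hρ hsum hcen θ hθ T hT
  set Bβ : ℝ := ∑ i, |ρ i * α i| with hBβ
  have hBβ0 : 0 ≤ Bβ := Finset.sum_nonneg fun i _ => abs_nonneg _
  have hBβk : ∀ k, |ρ k * α k| ≤ Bβ := fun k =>
    Finset.single_le_sum (f := fun i => |ρ i * α i|) (fun i _ => abs_nonneg _)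
      (Finset.mem_univ k)
  set Cρ : ℝ := ∑ k, (ρ k)⁻¹ with hCρ
  have hCρ0 : 0 ≤ Cρ := Finset.sum_nonneg fun k _ => (inv_pos.mpr (hρ k)).le
  refine ⟨Cρ * (Cψ ^ 2 + 2 * Bβ * Cψ), by positivity, ?_⟩
  intro δ hδ s hs0 hsT
  obtain ⟨ψ, hψeq, hψle, hψ0⟩ := hdec δ hδ s hs0 hsT
  rw [inv_diag ρ hρ, diag_quad_form]
  set u : Fin K → ℝ := ρ ᵥ* NormedSpace.exp (s • Mof K ρ α θ δ) with hu
  set d : ℝ := δ * (Real.exp (-(θ * s)) - 1) with hd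
  have huk : ∀ k, u k = ρ k + d * (ρ k * α k) + ψ k := fun k => by
    simpa using congrFun hψeq k
  have hperterm : ∀ k, (ρ k)⁻¹ * u k ^ 2
      = ρ k + 2 * d * (ρ k * α k) + d ^ 2 * (ρ k * α k ^ 2) + 2 * ψ k
        + (ρ k)⁻¹ * (ψ k ^ 2 + 2 * d * (ρ k * α k) * ψ k) := by
    intro k
    rw [huk k]
    have hk : ρ k ≠ 0 := (hρ k).ne'
    field_simp
    ring
  have hsplit : ∑ k, (ρ k)⁻¹ * u k ^ 2
      = (∑ k, ρ k) + 2 * d * (∑ k, ρ k * α k) + d ^ 2 * (∑ k, ρ k * α k ^ 2)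
        + 2 * (∑ k, ψ k) + ∑ k, (ρ k)⁻¹ * (ψ k ^ 2 + 2 * d * (ρ k * α k) * ψ k) := by
    rw [Finset.sum_congr rfl fun k _ => hperterm k]
    rw [Finset.sum_add_distrib, Finset.sum_add_distrib, Finset.sum_add_distrib,
      Finset.sum_add_distrib, ← Finset.mul_sum, ← Finset.mul_sum, ← Finset.mul_sum]
  rw [hsplit, hsum, hcen, hψ0]
  have hclean : ∀ Err : ℝ, (1:ℝ) + 2 * d * 0 + d ^ 2 * (∑ k, ρ k * α k ^ 2) + 2 * 0 + Err
      - (1 + δ ^ 2 * (∑ k, ρ k * α k ^ 2) * (1 - Real.exp (-(θ * s))) ^ 2) = Err := by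
    intro Err
    rw [hd]
    ring
  rw [hclean]
  have hdabs : |d| ≤ |δ| := by
    rw [hd, abs_mul]
    have he1 : Real.exp (-(θ * s)) ≤ 1 := Real.exp_le_one_iff.mpr (by nlinarith)
    have he0 : 0 < Real.exp (-(θ * s)) := Real.exp_pos _
    have habs1 : |Real.exp (-(θ * s)) - 1| ≤ 1 := abs_le.mpr ⟨by linarith, by linarith⟩
    nlinarith [abs_nonneg δ]
  have hψk : ∀ k, |ψ k| ≤ Cψ * |δ| ^ 2 := fun k => by
    have h := hψle k
    rwa [← sq_abs δ] at h
  have habs43 : |δ| ^ 4 ≤ |δ| ^ 3 :=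
    pow_le_pow_of_le_one (abs_nonneg δ) hδ (by norm_num)
  have hterm : ∀ k, |(ρ k)⁻¹ * (ψ k ^ 2 + 2 * d * (ρ k * α k) * ψ k)|
      ≤ (ρ k)⁻¹ * ((Cψ ^ 2 + 2 * Bβ * Cψ) * |δ| ^ 3) := by
    intro k
    rw [abs_mul, abs_of_pos (inv_pos.mpr (hρ k))]
    apply mul_le_mul_of_nonneg_left _ (inv_pos.mpr (hρ k)).le
    have h1 : |ψ k ^ 2 + 2 * d * (ρ k * α k) * ψ k|
        ≤ |ψ k| ^ 2 + 2 * |d| * |ρ k * α k| * |ψ k| := by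
      calc |ψ k ^ 2 + 2 * d * (ρ k * α k) * ψ k|
          ≤ |ψ k ^ 2| + |2 * d * (ρ k * α k) * ψ k| := abs_add_le _ _
        _ = |ψ k| ^ 2 + 2 * |d| * |ρ k * α k| * |ψ k| := by
            rw [abs_pow, abs_mul, abs_mul, abs_mul, abs_two]
    have h2 : |ψ k| ^ 2 ≤ Cψ ^ 2 * |δ| ^ 3 := by
      have h2a : |ψ k| ^ 2 ≤ (Cψ * |δ| ^ 2) ^ 2 :=
        pow_le_pow_left₀ (abs_nonneg _) (hψk k) 2
      have h2b : (Cψ * |δ| ^ 2) ^ 2 = Cψ ^ 2 * |δ| ^ 4 := by ring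
      nlinarith [sq_nonneg Cψ, habs43]
    have h3 : 2 * |d| * |ρ k * α k| * |ψ k| ≤ 2 * Bβ * Cψ * |δ| ^ 3 := by
      have h3a : |d| * |ρ k * α k| ≤ |δ| * Bβ :=
        mul_le_mul hdabs (hBβk k) (abs_nonneg _) (abs_nonneg δ)
      have h3b : (|d| * |ρ k * α k|) * |ψ k| ≤ (|δ| * Bβ) * (Cψ * |δ| ^ 2) :=
        mul_le_mul h3a (hψk k) (abs_nonneg _) (by positivity)
      have h3c : (|δ| * Bβ) * (Cψ * |δ| ^ 2) = Bβ * Cψ * |δ| ^ 3 := by ring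
      nlinarith
    calc |ψ k ^ 2 + 2 * d * (ρ k * α k) * ψ k|
        ≤ |ψ k| ^ 2 + 2 * |d| * |ρ k * α k| * |ψ k| := h1
      _ ≤ Cψ ^ 2 * |δ| ^ 3 + 2 * Bβ * Cψ * |δ| ^ 3 := by linarith
      _ = (Cψ ^ 2 + 2 * Bβ * Cψ) * |δ| ^ 3 := by ring
  calc |∑ k, (ρ k)⁻¹ * (ψ k ^ 2 + 2 * d * (ρ k * α k) * ψ k)|
      ≤ ∑ k, |(ρ k)⁻¹ * (ψ k ^ 2 + 2 * d * (ρ k * α k) * ψ k)| :=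
        Finset.abs_sum_le_sum_abs _ _
    _ ≤ ∑ k, (ρ k)⁻¹ * ((Cψ ^ 2 + 2 * Bβ * Cψ) * |δ| ^ 3) :=
        Finset.sum_le_sum fun k _ => hterm k
    _ = Cρ * ((Cψ ^ 2 + 2 * Bβ * Cψ) * |δ| ^ 3) := by rw [← Finset.sum_mul]
    _ = Cρ * (Cψ ^ 2 + 2 * Bβ * Cψ) * |δ| ^ 3 := by ring


end Stmt18Aux

/-- Small-diversity expansion of the variance of the empirical mean: with group
fractions `ρ_k > 0` summing to 1, centered perturbations `∑ ρ_kα_k = 0`, `θ̄ > 0`,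
`T > 0`, drift matrices `(M_δ)_{ij} = −θ̄(1 + δα_i)(δ_{ij} − ρ_j)`, `R = diag(ρ)`:
`∫₀ᵀ ϱᵀ e^{sM_δ} R⁻¹ (e^{sM_δ})ᵀ ϱ ds = T + δ²(∑ ρ_kα_k²)∫₀ᵀ(1 − e^{−θ̄s})² ds + O(δ³)`
as `δ → 0`; equivalently `σ_T² = (σ²/N)∫₀ᵀ(…)ds` satisfies
`σ_T² = (σ²T/N)[1 + δ²(∑ ρ_kα_k²)(1/T)∫₀ᵀ(1 − e^{−θ̄s})² ds + O(δ³)]`. -/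
theorem stmt_18 (K : ℕ) (hK : 1 ≤ K) (ρ α : Fin K → ℝ)
    (hρ : ∀ k, 0 < ρ k) (hsum : ∑ k, ρ k = 1) (hcen : ∑ k, ρ k * α k = 0)
    (θ : ℝ) (hθ : 0 < θ) (T : ℝ) (hT : 0 < T)
    (M : ℝ → Matrix (Fin K) (Fin K) ℝ)
    (hM : ∀ δ : ℝ, M δ = Matrix.of fun i j =>
      -θ * (1 + δ * α i) * ((if i = j then (1:ℝ) else 0) - ρ j))
    (R : Matrix (Fin K) (Fin K) ℝ) (hR : R = Matrix.diagonal ρ) :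
    ((fun δ : ℝ =>
        (∫ s in (0:ℝ)..T,
          ρ ⬝ᵥ (NormedSpace.exp (s • M δ) * R⁻¹
              * (NormedSpace.exp (s • M δ))ᵀ).mulVec ρ)
          - (T + δ ^ 2 * (∑ k, ρ k * α k ^ 2)
              * ∫ s in (0:ℝ)..T, (1 - Real.exp (-(θ * s))) ^ 2))
      =O[nhds 0] (fun δ : ℝ => δ ^ 3)) ∧
    ∀ σ : ℝ, 0 < σ → ∀ N : ℕ, 1 ≤ N →
      ((fun δ : ℝ =>
          σ ^ 2 / N * (∫ s in (0:ℝ)..T,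
            ρ ⬝ᵥ (NormedSpace.exp (s • M δ) * R⁻¹
                * (NormedSpace.exp (s • M δ))ᵀ).mulVec ρ)
            - σ ^ 2 * T / N * (1 + δ ^ 2 * (∑ k, ρ k * α k ^ 2)
                * ((1 / T) * ∫ s in (0:ℝ)..T, (1 - Real.exp (-(θ * s))) ^ 2)))
        =O[nhds 0] (fun δ : ℝ => δ ^ 3)) := by
  obtain ⟨C, hC0, hkey⟩ := Stmt18Aux.key ρ α hρ hsum hcen θ hθ T hT
  have hMof : ∀ δ : ℝ, M δ = Stmt18Aux.Mof K ρ α θ δ := fun δ => hM δ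
  -- continuity of the integrands
  letI : SeminormedRing (Matrix (Fin K) (Fin K) ℝ) := Matrix.linftyOpSemiNormedRing
  letI : NormedRing (Matrix (Fin K) (Fin K) ℝ) := Matrix.linftyOpNormedRing
  letI : NormedAlgebra ℝ (Matrix (Fin K) (Fin K) ℝ) := Matrix.linftyOpNormedAlgebra
  have hgc : ∀ δ : ℝ, Continuous (fun s : ℝ =>
      ρ ⬝ᵥ (NormedSpace.exp (s • M δ) * R⁻¹
        * (NormedSpace.exp (s • M δ))ᵀ).mulVec ρ) := by
    intro δ
    have hE : Continuous fun s : ℝ => NormedSpace.exp (s • M δ) :=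
      (continuous_iff_continuousAt.mpr fun X =>
        (NormedSpace.exp_analytic (𝕂 := ℝ) X).continuousAt).comp
        (continuous_id.smul continuous_const)
    exact continuous_const.dotProduct
      (((hE.matrix_mul continuous_const).matrix_mul hE.matrix_transpose).matrix_mulVec
        continuous_const)
  have hfc : Continuous fun s : ℝ => (1 - Real.exp (-(θ * s))) ^ 2 :=
    ((continuous_const.sub (Real.continuous_exp.comp
      (continuous_const.mul continuous_id).neg)).pow 2)
  have hfint : IntervalIntegrable (fun s : ℝ => (1 - Real.exp (-(θ * s))) ^ 2)
      MeasureTheory.volume 0 T := hfc.intervalIntegrable 0 T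
  -- the main O-estimate
  have hmain : (fun δ : ℝ =>
      (∫ s in (0:ℝ)..T,
        ρ ⬝ᵥ (NormedSpace.exp (s • M δ) * R⁻¹
            * (NormedSpace.exp (s • M δ))ᵀ).mulVec ρ)
        - (T + δ ^ 2 * (∑ k, ρ k * α k ^ 2)
            * ∫ s in (0:ℝ)..T, (1 - Real.exp (-(θ * s))) ^ 2))
      =O[nhds 0] (fun δ : ℝ => δ ^ 3) := by
    rw [isBigO_iff]
    refine ⟨T * C, ?_⟩
    have hball : Metric.ball (0:ℝ) 1 ∈ nhds 0 := Metric.ball_mem_nhds 0 one_pos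
    filter_upwards [hball] with δ hδmem
    have hδ : |δ| ≤ 1 := by
      have := Metric.mem_ball.mp hδmem
      rw [Real.dist_eq, sub_zero] at this
      exact this.le
    set t : ℝ → ℝ := fun s =>
      1 + δ ^ 2 * (∑ k, ρ k * α k ^ 2) * (1 - Real.exp (-(θ * s))) ^ 2 with ht
    have htc : Continuous t := continuous_const.add (continuous_const.mul hfc)
    have htint : IntervalIntegrable t MeasureTheory.volume 0 T :=
      htc.intervalIntegrable 0 T
    have hgint : IntervalIntegrable (fun s : ℝ =>
        ρ ⬝ᵥ (NormedSpace.exp (s • M δ) * R⁻¹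
          * (NormedSpace.exp (s • M δ))ᵀ).mulVec ρ) MeasureTheory.volume 0 T :=
      (hgc δ).intervalIntegrable 0 T
    have h2 : ∫ s in (0:ℝ)..T, t s
        = T + δ ^ 2 * (∑ k, ρ k * α k ^ 2)
            * ∫ s in (0:ℝ)..T, (1 - Real.exp (-(θ * s))) ^ 2 := by
      rw [ht]
      rw [intervalIntegral.integral_add (intervalIntegrable_const)
        (hfint.const_mul _), intervalIntegral.integral_const_mul,
        intervalIntegral.integral_const]
      simp [smul_eq_mul]
    have hbound : ∀ x ∈ Set.uIoc (0:ℝ) T,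
        ‖(ρ ⬝ᵥ (NormedSpace.exp (x • M δ) * R⁻¹
            * (NormedSpace.exp (x • M δ))ᵀ).mulVec ρ) - t x‖ ≤ C * |δ| ^ 3 := by
      intro x hx
      rw [Set.uIoc_of_le hT.le] at hx
      have h1 := hkey δ hδ x hx.1.le hx.2
      rw [Real.norm_eq_abs, ht]
      rw [hMof δ, hR]
      exact h1
    calc ‖(∫ s in (0:ℝ)..T,
          ρ ⬝ᵥ (NormedSpace.exp (s • M δ) * R⁻¹
              * (NormedSpace.exp (s • M δ))ᵀ).mulVec ρ)
          - (T + δ ^ 2 * (∑ k, ρ k * α k ^ 2)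
              * ∫ s in (0:ℝ)..T, (1 - Real.exp (-(θ * s))) ^ 2)‖
        = ‖∫ s in (0:ℝ)..T,
            ((ρ ⬝ᵥ (NormedSpace.exp (s • M δ) * R⁻¹
              * (NormedSpace.exp (s • M δ))ᵀ).mulVec ρ) - t s)‖ := by
          rw [intervalIntegral.integral_sub hgint htint, h2]
      _ ≤ C * |δ| ^ 3 * |T - 0| :=
          intervalIntegral.norm_integral_le_of_norm_le_const hbound
      _ = T * C * ‖δ ^ 3‖ := by
          rw [sub_zero, abs_of_pos hT, Real.norm_eq_abs, abs_pow]
          ring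
  constructor
  · exact hmain
  · intro σ hσ N hN
    have hN0 : (N : ℝ) ≠ 0 := by
      have : (0:ℝ) < (N : ℝ) := by exact_mod_cast Nat.lt_of_lt_of_le Nat.zero_lt_one hN
      exact this.ne'
    have hT0 : T ≠ 0 := hT.ne'
    have heq : (fun δ : ℝ =>
        σ ^ 2 / N * (∫ s in (0:ℝ)..T,
          ρ ⬝ᵥ (NormedSpace.exp (s • M δ) * R⁻¹
              * (NormedSpace.exp (s • M δ))ᵀ).mulVec ρ)
          - σ ^ 2 * T / N * (1 + δ ^ 2 * (∑ k, ρ k * α k ^ 2)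
              * ((1 / T) * ∫ s in (0:ℝ)..T, (1 - Real.exp (-(θ * s))) ^ 2)))
        = (fun δ : ℝ => σ ^ 2 / N * ((∫ s in (0:ℝ)..T,
          ρ ⬝ᵥ (NormedSpace.exp (s • M δ) * R⁻¹
              * (NormedSpace.exp (s • M δ))ᵀ).mulVec ρ)
          - (T + δ ^ 2 * (∑ k, ρ k * α k ^ 2)
              * ∫ s in (0:ℝ)..T, (1 - Real.exp (-(θ * s))) ^ 2))) := by
      funext δ
      field_simp
    rw [heq]
    exact hmain.const_mul_left _
end

section
/- Let K ≥ 1, ρ_1,…,ρ_K > 0 with ∑ρ_k = 1, α_1,…,α_K ∈ ℝ with ∑ρ_kα_k = 0, θ̄ > 0 and σ > 0. For δ in a neighborhood of 0, set θ_k(δ) = θ̄(1 + δα_k) and define ξ_b(δ)² = ( ∑_{k=1}^K (ρ_k/θ_k(δ))·(1 − 3σ²/(2θ_k(δ))) ) / ( ∑_{k=1}^K ρ_k/θ_k(δ) ). Then, as δ → 0, ξ_b(δ)² = (1 − 3σ²/(2θ̄)) − δ²·(3σ²/θ̄)·(∑_{k=1}^K ρ_k α_k²) + O(δ³). In particular,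 for all sufficiently small δ ≠ 0 with ∑ρ_kα_k² > 0, ξ_b(δ)² < ξ_b(0)² = 1 − 3σ²/(2θ̄): diversity reduces the gap between the two equilibrium states. -/
open Filter Asymptotics

private lemma auxA (r a d : ℝ) (hu : 1 + d * a ≠ 0) :
    r / (1 + d * a) - r = d ^ 2 * (r * a ^ 2 / (1 + d * a)) - d * (r * a) := by
  field_simp; ring

private lemma auxB (r a d : ℝ) (hu : 1 + d * a ≠ 0) :
    r / (1 + d * a) ^ 2 - 2 * (r / (1 + d * a)) + r
      = r * (1 / (1 + d * a) - 1) ^ 2 := by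
  field_simp; ring

private lemma auxC (r a d : ℝ) (hu : 1 + d * a ≠ 0) :
    r / (1 + d * a) - r / (1 + d * a) ^ 2
      = d * (r * a) - 2 * d ^ 2 * (r * a ^ 2)
        + d ^ 3 * (r * (3 * a ^ 3 + 2 * d * a ^ 4) / (1 + d * a) ^ 2) := by
  field_simp; ring

private lemma auxD (r a d : ℝ) (hu : 1 + d * a ≠ 0) :
    r / (1 + d * a) = r - d * (r * a / (1 + d * a)) := by
  field_simp; ring


/-- Small-diversity expansion of the squared equilibrium value: with group
fractions `ρ_k > 0` summing to 1, centered perturbations `∑ ρ_kα_k = 0`,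
`θ̄, σ > 0`, `θ_k(δ) = θ̄(1 + δα_k)` and
`ξ_b(δ)² = (∑ (ρ_k/θ_k(δ))(1 − 3σ²/(2θ_k(δ)))) / (∑ ρ_k/θ_k(δ))`, one has
`ξ_b(δ)² = (1 − 3σ²/(2θ̄)) − δ²(3σ²/θ̄)(∑ ρ_kα_k²) + O(δ³)` as `δ → 0`;
in particular, if `∑ ρ_kα_k² > 0` then for all sufficiently small `δ ≠ 0`,
`ξ_b(δ)² < 1 − 3σ²/(2θ̄)`: diversity reduces the gap between the equilibria. -/
theorem stmt_19 (K : ℕ) (hK : 1 ≤ K) (ρ α : Fin K → ℝ)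
    (hρ : ∀ k, 0 < ρ k) (hsum : ∑ k, ρ k = 1) (hcen : ∑ k, ρ k * α k = 0)
    (θ σ : ℝ) (hθ : 0 < θ) (hσ : 0 < σ)
    (ξbsq : ℝ → ℝ)
    (hξ : ∀ δ : ℝ, ξbsq δ =
      (∑ k, (ρ k / (θ * (1 + δ * α k))) * (1 - 3 * σ ^ 2 / (2 * (θ * (1 + δ * α k)))))
        / (∑ k, ρ k / (θ * (1 + δ * α k)))) :
    ((fun δ : ℝ => ξbsq δ
        - ((1 - 3 * σ ^ 2 / (2 * θ))
            - δ ^ 2 * (3 * σ ^ 2 / θ) * ∑ k, ρ k * α k ^ 2))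
      =O[nhds 0] (fun δ : ℝ => δ ^ 3)) ∧
    ((0 < ∑ k, ρ k * α k ^ 2) →
      ∀ᶠ δ : ℝ in nhdsWithin 0 {0}ᶜ, ξbsq δ < 1 - 3 * σ ^ 2 / (2 * θ)) := by
  have hθ' : θ ≠ 0 := ne_of_gt hθ
  have hc : (0:ℝ) < 3 * σ ^ 2 / (2 * θ) := by positivity
  -- uniform bound on the α's
  obtain ⟨M, hM0, hM⟩ : ∃ M : ℝ, 0 ≤ M ∧ ∀ k, |α k| ≤ M := by
    refine ⟨∑ k, |α k|, Finset.sum_nonneg fun k _ => abs_nonneg _, fun k => ?_⟩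
    exact Finset.single_le_sum (f := fun k => |α k|) (fun i _ => abs_nonneg _)
      (Finset.mem_univ k)
  have hε : (0:ℝ) < 1 / (2 * (M + 1)) := by positivity
  have hu_of : ∀ δ : ℝ, |δ| < 1 / (2 * (M + 1)) → ∀ k, (1:ℝ)/2 < 1 + δ * α k := by
    intro δ hδ k
    have h1 : |δ * α k| ≤ |δ| * (M + 1) := by
      rw [abs_mul]
      exact mul_le_mul_of_nonneg_left (le_trans (hM k) (by linarith)) (abs_nonneg _)
    have h2 : |δ| * (M + 1) < (1 / (2 * (M + 1))) * (M + 1) :=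
      mul_lt_mul_of_pos_right hδ (by linarith)
    have h3 : (1 / (2 * (M + 1))) * (M + 1) = 1/2 := by
      field_simp
    have h4 : |δ * α k| < 1/2 := by rw [h3] at h2; linarith
    have := abs_lt.mp h4
    linarith
  -- positivity of the denominator sum
  have hP1pos : ∀ δ : ℝ, (∀ k, (1:ℝ)/2 < 1 + δ * α k) →
      0 < ∑ k, ρ k / (1 + δ * α k) := by
    intro δ hu
    refine Finset.sum_pos (fun k _ => div_pos (hρ k) (by linarith [hu k])) ?_
    exact ⟨⟨0, hK⟩, Finset.mem_univ _⟩
  -- representation of ξbsq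
  have hrepr : ∀ δ : ℝ, (∀ k, (1:ℝ)/2 < 1 + δ * α k) →
      ξbsq δ = ((∑ k, ρ k / (1 + δ * α k))
          - (3 * σ ^ 2 / (2 * θ)) * ∑ k, ρ k / (1 + δ * α k) ^ 2)
        / (∑ k, ρ k / (1 + δ * α k)) := by
    intro δ hu
    have hu' : ∀ k, 1 + δ * α k ≠ 0 := fun k => by linarith [hu k]
    have hN : (∑ k, (ρ k / (θ * (1 + δ * α k))) *
        (1 - 3 * σ ^ 2 / (2 * (θ * (1 + δ * α k)))))
        = ((∑ k, ρ k / (1 + δ * α k))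
            - (3 * σ ^ 2 / (2 * θ)) * ∑ k, ρ k / (1 + δ * α k) ^ 2) / θ := by
      rw [Finset.mul_sum, ← Finset.sum_sub_distrib, Finset.sum_div]
      refine Finset.sum_congr rfl fun k _ => ?_
      have := hu' k
      field_simp
    have hD : (∑ k, ρ k / (θ * (1 + δ * α k))) = (∑ k, ρ k / (1 + δ * α k)) / θ := by
      rw [Finset.sum_div]
      refine Finset.sum_congr rfl fun k _ => ?_
      rw [div_div]; ring_nf
    rw [hξ δ, hN, hD, div_div_div_cancel_right₀]
    exact hθ'
  -- key identities
  have hI1 : ∀ δ : ℝ, (∀ k, (1:ℝ)/2 < 1 + δ * α k) →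
      (∑ k, ρ k / (1 + δ * α k)) - 1
        = δ ^ 2 * ∑ k, ρ k * α k ^ 2 / (1 + δ * α k) := by
    intro δ hu
    have hu' : ∀ k, 1 + δ * α k ≠ 0 := fun k => by linarith [hu k]
    calc (∑ k, ρ k / (1 + δ * α k)) - 1
        = ∑ k, (ρ k / (1 + δ * α k) - ρ k) := by
          rw [Finset.sum_sub_distrib, hsum]
      _ = ∑ k, (δ ^ 2 * (ρ k * α k ^ 2 / (1 + δ * α k)) - δ * (ρ k * α k)) :=
          Finset.sum_congr rfl fun k _ => auxA _ _ _ (hu' k)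
      _ = δ ^ 2 * (∑ k, ρ k * α k ^ 2 / (1 + δ * α k)) - δ * ∑ k, ρ k * α k := by
          rw [Finset.sum_sub_distrib, ← Finset.mul_sum, ← Finset.mul_sum]
      _ = δ ^ 2 * ∑ k, ρ k * α k ^ 2 / (1 + δ * α k) := by rw [hcen]; ring
  have hI2 : ∀ δ : ℝ, (∀ k, (1:ℝ)/2 < 1 + δ * α k) →
      (∑ k, ρ k / (1 + δ * α k) ^ 2) - 2 * (∑ k, ρ k / (1 + δ * α k)) + 1
        = ∑ k, ρ k * (1 / (1 + δ * α k) - 1) ^ 2 := by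
    intro δ hu
    have hu' : ∀ k, 1 + δ * α k ≠ 0 := fun k => by linarith [hu k]
    calc (∑ k, ρ k / (1 + δ * α k) ^ 2) - 2 * (∑ k, ρ k / (1 + δ * α k)) + 1
        = ∑ k, (ρ k / (1 + δ * α k) ^ 2 - 2 * (ρ k / (1 + δ * α k)) + ρ k) := by
          rw [Finset.sum_add_distrib, Finset.sum_sub_distrib, hsum, ← Finset.mul_sum]
      _ = _ := Finset.sum_congr rfl fun k _ => auxB _ _ _ (hu' k)
  have hI3 : ∀ δ : ℝ, (∀ k, (1:ℝ)/2 < 1 + δ * α k) →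
      (∑ k, ρ k / (1 + δ * α k)) - (∑ k, ρ k / (1 + δ * α k) ^ 2)
        = -(2 * δ ^ 2 * ∑ k, ρ k * α k ^ 2)
          + δ ^ 3 * ∑ k, ρ k * (3 * α k ^ 3 + 2 * δ * α k ^ 4) / (1 + δ * α k) ^ 2 := by
    intro δ hu
    have hu' : ∀ k, 1 + δ * α k ≠ 0 := fun k => by linarith [hu k]
    calc (∑ k, ρ k / (1 + δ * α k)) - (∑ k, ρ k / (1 + δ * α k) ^ 2)
        = ∑ k, (ρ k / (1 + δ * α k) - ρ k / (1 + δ * α k) ^ 2) :=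
          (Finset.sum_sub_distrib _ _).symm
      _ = ∑ k, (δ * (ρ k * α k) - 2 * δ ^ 2 * (ρ k * α k ^ 2)
            + δ ^ 3 * (ρ k * (3 * α k ^ 3 + 2 * δ * α k ^ 4) / (1 + δ * α k) ^ 2)) :=
          Finset.sum_congr rfl fun k _ => auxC _ _ _ (hu' k)
      _ = δ * (∑ k, ρ k * α k) - 2 * δ ^ 2 * (∑ k, ρ k * α k ^ 2)
            + δ ^ 3 * ∑ k, ρ k * (3 * α k ^ 3 + 2 * δ * α k ^ 4) / (1 + δ * α k) ^ 2 := by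
          rw [Finset.sum_add_distrib, Finset.sum_sub_distrib, ← Finset.mul_sum,
            ← Finset.mul_sum, ← Finset.mul_sum]
      _ = _ := by rw [hcen]; ring
  have hI4 : ∀ δ : ℝ, (∀ k, (1:ℝ)/2 < 1 + δ * α k) →
      (∑ k, ρ k / (1 + δ * α k)) = 1 - δ * ∑ k, ρ k * α k / (1 + δ * α k) := by
    intro δ hu
    have hu' : ∀ k, 1 + δ * α k ≠ 0 := fun k => by linarith [hu k]
    calc (∑ k, ρ k / (1 + δ * α k))
        = ∑ k, (ρ k - δ * (ρ k * α k / (1 + δ * α k))) :=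
          Finset.sum_congr rfl fun k _ => auxD _ _ _ (hu' k)
      _ = 1 - δ * ∑ k, ρ k * α k / (1 + δ * α k) := by
          rw [Finset.sum_sub_distrib, hsum, ← Finset.mul_sum]
  -- the factorization for part 1
  have halg : ∀ d p1 p2 s q r1 : ℝ, p1 ≠ 0 →
      p1 - p2 = -(2 * d ^ 2 * s) + d ^ 3 * r1 → p1 = 1 - d * q →
      (p1 - (3 * σ ^ 2 / (2 * θ)) * p2) / p1
          - ((1 - 3 * σ ^ 2 / (2 * θ)) - d ^ 2 * (3 * σ ^ 2 / θ) * s)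
        = d ^ 3 * ((3 * σ ^ 2 / (2 * θ)) * (r1 - 2 * (s * q)) / p1) := by
    intro d p1 p2 s q r1 hp1 h1 h2
    have step1 : (p1 - (3 * σ ^ 2 / (2 * θ)) * p2) / p1
        - ((1 - 3 * σ ^ 2 / (2 * θ)) - d ^ 2 * (3 * σ ^ 2 / θ) * s)
        = ((3 * σ ^ 2 / (2 * θ)) * (p1 - p2)
            + 2 * (3 * σ ^ 2 / (2 * θ)) * (d ^ 2 * s) * p1) / p1 := by
      field_simp
      ring
    rw [step1, h1]
    have hnum : (3 * σ ^ 2 / (2 * θ)) * (-(2 * d ^ 2 * s) + d ^ 3 * r1)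
        + 2 * (3 * σ ^ 2 / (2 * θ)) * (d ^ 2 * s) * p1
        = d ^ 3 * ((3 * σ ^ 2 / (2 * θ)) * (r1 - 2 * (s * q))) := by
      rw [h2]; ring
    rw [hnum, mul_div_assoc]
  have hfact : ∀ δ : ℝ, (∀ k, (1:ℝ)/2 < 1 + δ * α k) →
      ξbsq δ - ((1 - 3 * σ ^ 2 / (2 * θ)) - δ ^ 2 * (3 * σ ^ 2 / θ) * ∑ k, ρ k * α k ^ 2)
        = δ ^ 3 * ((3 * σ ^ 2 / (2 * θ)) *
            ((∑ k, ρ k * (3 * α k ^ 3 + 2 * δ * α k ^ 4) / (1 + δ * α k) ^ 2)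
              - 2 * ((∑ k, ρ k * α k ^ 2) * ∑ k, ρ k * α k / (1 + δ * α k)))
            / (∑ k, ρ k / (1 + δ * α k))) := by
    intro δ hu
    have hp : (∑ k, ρ k / (1 + δ * α k)) ≠ 0 := ne_of_gt (hP1pos δ hu)
    rw [hrepr δ hu]
    exact halg δ _ _ _ _ _ hp (hI3 δ hu) (hI4 δ hu)
  constructor
  · -- BigO part
    have hev : ∀ᶠ δ : ℝ in nhds (0:ℝ), |δ| < 1 / (2 * (M + 1)) := by
      simpa using eventually_abs_sub_lt (0:ℝ) hε
    set g : ℝ → ℝ := fun δ => (3 * σ ^ 2 / (2 * θ)) *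
        ((∑ k, ρ k * (3 * α k ^ 3 + 2 * δ * α k ^ 4) / (1 + δ * α k) ^ 2)
          - 2 * ((∑ k, ρ k * α k ^ 2) * ∑ k, ρ k * α k / (1 + δ * α k)))
        / (∑ k, ρ k / (1 + δ * α k)) with hg_def
    have heq : (fun δ : ℝ => ξbsq δ
        - ((1 - 3 * σ ^ 2 / (2 * θ)) - δ ^ 2 * (3 * σ ^ 2 / θ) * ∑ k, ρ k * α k ^ 2))
        =ᶠ[nhds 0] fun δ => δ ^ 3 * g δ := by
      filter_upwards [hev] with δ hδ
      exact hfact δ (hu_of δ hδ)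
    have hgO : g =O[nhds (0:ℝ)] (fun _ => (1:ℝ)) := by
      have hden : Tendsto (fun δ : ℝ => ∑ k, ρ k / (1 + δ * α k)) (nhds 0) (nhds 1) := by
        have h0 : Tendsto (fun δ : ℝ => ∑ k, ρ k / (1 + δ * α k)) (nhds 0)
            (nhds (∑ k, ρ k / (1 + (0:ℝ) * α k))) :=
          tendsto_finset_sum _ fun k _ =>
            (ContinuousAt.div (by fun_prop) (by fun_prop) (by norm_num)).tendsto
        simpa [hsum] using h0
      have hnum1 : Tendsto
          (fun δ : ℝ => ∑ k, ρ k * (3 * α k ^ 3 + 2 * δ * α k ^ 4) / (1 + δ * α k) ^ 2)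
          (nhds 0)
          (nhds (∑ k, ρ k * (3 * α k ^ 3 + 2 * (0:ℝ) * α k ^ 4) / (1 + (0:ℝ) * α k) ^ 2)) :=
        tendsto_finset_sum _ fun k _ =>
          (ContinuousAt.div (by fun_prop) (by fun_prop) (by norm_num)).tendsto
      have hnum2 : Tendsto (fun δ : ℝ => ∑ k, ρ k * α k / (1 + δ * α k)) (nhds 0)
          (nhds (∑ k, ρ k * α k / (1 + (0:ℝ) * α k))) :=
        tendsto_finset_sum _ fun k _ =>
          (ContinuousAt.div (by fun_prop) (by fun_prop) (by norm_num)).tendsto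
      have htt : Tendsto g (nhds (0:ℝ))
          (nhds ((3 * σ ^ 2 / (2 * θ)) *
            ((∑ k, ρ k * (3 * α k ^ 3 + 2 * (0:ℝ) * α k ^ 4) / (1 + (0:ℝ) * α k) ^ 2)
              - 2 * ((∑ k, ρ k * α k ^ 2) * ∑ k, ρ k * α k / (1 + (0:ℝ) * α k))) / 1)) := by
        rw [hg_def]
        exact (tendsto_const_nhds.mul
          (hnum1.sub (tendsto_const_nhds.mul (tendsto_const_nhds.mul hnum2)))).div
          hden one_ne_zero
      exact htt.isBigO_one ℝ
    calc (fun δ : ℝ => ξbsq δ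
        - ((1 - 3 * σ ^ 2 / (2 * θ)) - δ ^ 2 * (3 * σ ^ 2 / θ) * ∑ k, ρ k * α k ^ 2))
        =O[nhds 0] (fun δ : ℝ => δ ^ 3 * g δ) := heq.isBigO
      _ =O[nhds 0] (fun δ : ℝ => δ ^ 3) := by
          have := (isBigO_refl (fun δ : ℝ => δ ^ 3) (nhds 0)).mul hgO
          simpa using this
  · -- strict inequality part
    intro hS
    obtain ⟨k0, hk0⟩ : ∃ k, 0 < ρ k * α k ^ 2 := by
      by_contra h
      push_neg at h
      have : (∑ k, ρ k * α k ^ 2) ≤ 0 := Finset.sum_nonpos fun k _ => h k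
      linarith
    have hev : ∀ᶠ δ : ℝ in nhds (0:ℝ), |δ| < 1 / (2 * (M + 1)) := by
      simpa using eventually_abs_sub_lt (0:ℝ) hε
    filter_upwards [eventually_nhdsWithin_of_eventually_nhds hev,
      self_mem_nhdsWithin] with δ hδ (hδ0 : δ ≠ 0)
    have hu := hu_of δ hδ
    have hp := hP1pos δ hu
    have hTpos : 0 < ∑ k, ρ k * α k ^ 2 / (1 + δ * α k) := by
      refine Finset.sum_pos' (fun k _ => div_nonneg (mul_nonneg (hρ k).le (sq_nonneg _)) (by linarith [hu k])) ?_
      exact ⟨k0, Finset.mem_univ _, div_pos hk0 (by linarith [hu k0])⟩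
    have hWnn : 0 ≤ ∑ k, ρ k * (1 / (1 + δ * α k) - 1) ^ 2 :=
      Finset.sum_nonneg fun k _ => mul_nonneg (hρ k).le (sq_nonneg _)
    have hnum : 0 < (∑ k, ρ k / (1 + δ * α k) ^ 2) - (∑ k, ρ k / (1 + δ * α k)) := by
      have h1 := hI1 δ hu
      have h2 := hI2 δ hu
      have h3 : 0 < δ ^ 2 * ∑ k, ρ k * α k ^ 2 / (1 + δ * α k) :=
        mul_pos (by positivity) hTpos
      linarith
    rw [hrepr δ hu]
    have key : ((∑ k, ρ k / (1 + δ * α k))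
          - (3 * σ ^ 2 / (2 * θ)) * ∑ k, ρ k / (1 + δ * α k) ^ 2)
        / (∑ k, ρ k / (1 + δ * α k))
        = (1 - 3 * σ ^ 2 / (2 * θ))
          - (3 * σ ^ 2 / (2 * θ)) *
            ((∑ k, ρ k / (1 + δ * α k) ^ 2) - (∑ k, ρ k / (1 + δ * α k)))
            / (∑ k, ρ k / (1 + δ * α k)) := by
      field_simp
      ring
    rw [key]
    have hpos : 0 < (3 * σ ^ 2 / (2 * θ)) *
        ((∑ k, ρ k / (1 + δ * α k) ^ 2) - (∑ k, ρ k / (1 + δ * α k)))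
        / (∑ k, ρ k / (1 + δ * α k)) := div_pos (mul_pos hc hnum) hp
    linarith
end
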